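/- arXiv:1011.0967 — 3 statements merged into one kernel-verified Lean document; each statement's English description precedes it below -/
import Mathlib

section
/- Let γ ∈ (0,1), p ≥ 1 with 2pγ > 1, and for a continuous function f : [0,1] → ℝ define ‖f‖_{γ,p} = ( ∫_0^1 ∫_0^1 (f(ζ)-f(η))^{2p} / |ζ-η|^{2pγ+2} dζ dη )^{1/(2p)}. Then there is a constant C (depending only on γ, p) such that the Hölder seminorm satisfies sup_{s<t} |f(t)-f(s)|/(t-s)^γ ≤ C ‖f‖_{γ,p}. -/
open MeasureTheory Set

private lemma garsia_avg_diff (γ : ℝ) (hγ0 : 0 < γ) (p : ℕ) (hp : 1 ≤ p) (f : ℝ → ℝ)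
    (hf : ContinuousOn f (Icc 0 1))
    (hK : IntegrableOn
        (fun q : ℝ × ℝ => (f q.1 - f q.2) ^ (2 * p) / |q.1 - q.2| ^ (2 * (p:ℝ) * γ + 2))
        (Icc (0:ℝ) 1 ×ˢ Icc (0:ℝ) 1))
    {a b c d : ℝ} (hc0 : 0 ≤ c) (hca : c ≤ a) (hab : a < b) (hbd : b ≤ d) (hd1 : d ≤ 1) :
    |(b - a)⁻¹ * (∫ x in Icc a b, f x) - (d - c)⁻¹ * ∫ x in Icc c d, f x| ≤
      ((b - a) * (d - c)) ^ (-(1 / (2 * (p:ℝ)))) * (d - c) ^ (γ + 1 / (p:ℝ)) *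
        (∫ q in Icc (0:ℝ) 1 ×ˢ Icc (0:ℝ) 1,
          (f q.1 - f q.2) ^ (2 * p) / |q.1 - q.2| ^ (2 * (p:ℝ) * γ + 2)) ^ (1 / (2 * (p:ℝ))) := by
  have hp0 : (0:ℝ) < p := by exact_mod_cast hp
  have hp1 : (1:ℝ) ≤ p := by exact_mod_cast hp
  set Q : ℝ := 2 * (p:ℝ) with hQ
  have hQ1 : 1 < Q := by rw [hQ]; linarith
  have hQ0 : 0 < Q := by linarith
  have hcd : c < d := lt_of_le_of_lt hca (lt_of_lt_of_le hab hbd)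
  have hba : (0:ℝ) < b - a := by linarith
  have hdc : (0:ℝ) < d - c := by linarith
  have ha0 : 0 ≤ a := le_trans hc0 hca
  have hb1 : b ≤ 1 := le_trans hbd hd1
  set K : ℝ × ℝ → ℝ :=
    fun q : ℝ × ℝ => (f q.1 - f q.2) ^ (2 * p) / |q.1 - q.2| ^ (2 * (p:ℝ) * γ + 2) with hKdef
  set N : ℝ := ∫ q in Icc (0:ℝ) 1 ×ˢ Icc (0:ℝ) 1, K q with hN
  have hKnonneg : ∀ z : ℝ × ℝ, 0 ≤ K z := fun z =>
    div_nonneg (Even.pow_nonneg (even_two_mul p) _) (Real.rpow_nonneg (abs_nonneg _) _)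
  have hN0 : 0 ≤ N := setIntegral_nonneg (measurableSet_Icc.prod measurableSet_Icc)
    (fun z _ => hKnonneg z)
  set R : Set (ℝ × ℝ) := Icc a b ×ˢ Icc c d with hR
  have hRsub : R ⊆ Icc (0:ℝ) 1 ×ˢ Icc (0:ℝ) 1 :=
    prod_mono (Icc_subset_Icc ha0 hb1) (Icc_subset_Icc hc0 hd1)
  have hRmeas : MeasurableSet R := measurableSet_Icc.prod measurableSet_Icc
  have hRcomp : IsCompact R := isCompact_Icc.prod isCompact_Icc
  have hmaps1 : MapsTo (Prod.fst : ℝ × ℝ → ℝ) R (Icc 0 1) := fun z hz =>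
    Icc_subset_Icc ha0 hb1 hz.1
  have hmaps2 : MapsTo (Prod.snd : ℝ × ℝ → ℝ) R (Icc 0 1) := fun z hz =>
    Icc_subset_Icc hc0 hd1 hz.2
  have hcont : ContinuousOn (fun z : ℝ × ℝ => f z.1 - f z.2) R :=
    (hf.comp continuous_fst.continuousOn hmaps1).sub
      (hf.comp continuous_snd.continuousOn hmaps2)
  -- volume of R is finite
  have hRvol : volume R < ⊤ := hRcomp.measure_lt_top
  haveI : IsFiniteMeasure (volume.restrict R) :=
    ⟨by rwa [Measure.restrict_apply_univ]⟩
  -- Step 1 : rewrite difference of averages as integral over R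
  have hfab : IntegrableOn f (Icc a b) :=
    (hf.mono (Icc_subset_Icc ha0 hb1)).integrableOn_compact isCompact_Icc
  have hfcd : IntegrableOn f (Icc c d) :=
    (hf.mono (Icc_subset_Icc hc0 hd1)).integrableOn_compact isCompact_Icc
  have hprodmeas : (volume : Measure (ℝ×ℝ)).restrict R
      = (volume.restrict (Icc a b)).prod (volume.restrict (Icc c d)) := by
    rw [Measure.prod_restrict, ← Measure.volume_eq_prod]
  have int1 : ∫ z in R, f z.1 = (∫ x in Icc a b, f x) * (d - c) := by
    calc ∫ z in R, f z.1
        = ∫ z, f z.1 * (fun _ : ℝ => (1:ℝ)) z.2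
            ∂((volume.restrict (Icc a b)).prod (volume.restrict (Icc c d))) := by
          rw [← hprodmeas]; simp
      _ = (∫ x in Icc a b, f x) * ∫ y in Icc c d, (1:ℝ) :=
          integral_prod_mul (L := ℝ) f (fun _ => (1:ℝ))
      _ = (∫ x in Icc a b, f x) * (d - c) := by
          simp [Real.volume_Icc, ENNReal.toReal_ofReal hdc.le, hcd.le]
  have int2 : ∫ z in R, f z.2 = (b - a) * ∫ y in Icc c d, f y := by
    calc ∫ z in R, f z.2
        = ∫ z, (fun _ : ℝ => (1:ℝ)) z.1 * f z.2
            ∂((volume.restrict (Icc a b)).prod (volume.restrict (Icc c d))) := by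
          rw [← hprodmeas]; simp
      _ = (∫ x in Icc a b, (1:ℝ)) * ∫ y in Icc c d, f y :=
          integral_prod_mul (L := ℝ) (fun _ => (1:ℝ)) f
      _ = (b - a) * ∫ y in Icc c d, f y := by
          simp [Real.volume_Icc, ENNReal.toReal_ofReal hba.le, hab.le]
  have hint1 : IntegrableOn (fun z : ℝ × ℝ => f z.1) R := by
    exact (hf.comp continuous_fst.continuousOn hmaps1).integrableOn_compact hRcomp
  have hint2 : IntegrableOn (fun z : ℝ × ℝ => f z.2) R := by
    exact (hf.comp continuous_snd.continuousOn hmaps2).integrableOn_compact hRcomp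
  have intsub : ∫ z in R, (f z.1 - f z.2)
      = (∫ x in Icc a b, f x) * (d - c) - (b - a) * ∫ y in Icc c d, f y := by
    rw [integral_sub hint1 hint2, int1, int2]
  have key : (b - a)⁻¹ * (∫ x in Icc a b, f x) - (d - c)⁻¹ * (∫ x in Icc c d, f x)
      = ((b - a) * (d - c))⁻¹ * ∫ z in R, (f z.1 - f z.2) := by
    have alg : ∀ I1 I2 u v : ℝ, u ≠ 0 → v ≠ 0 →
        u⁻¹ * I1 - v⁻¹ * I2 = (u * v)⁻¹ * (I1 * v - u * I2) := by
      intros I1 I2 u v hu hv; field_simp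
    rw [intsub]
    exact alg (∫ x in Icc a b, f x) (∫ y in Icc c d, f y) (b - a) (d - c) hba.ne' hdc.ne'
  set e : ℝ := 2 * (p:ℝ) * γ + 2 with he
  have he0 : 0 < e := by rw [he]; nlinarith
  set V : ℝ := (b - a) * (d - c) with hV
  have hV0 : 0 < V := mul_pos hba hdc
  have hvolR : (volume R).toReal = V := by
    rw [hR, Measure.volume_eq_prod, Measure.prod_prod, Real.volume_Icc, Real.volume_Icc,
      ← ENNReal.ofReal_mul hba.le, ENNReal.toReal_ofReal (le_of_lt hV0)]
  set g : ℝ × ℝ → ℝ := fun z => |f z.1 - f z.2| with hg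
  have hgcont : ContinuousOn g R := hcont.abs
  have hgnonneg : ∀ z, 0 ≤ g z := fun z => abs_nonneg _
  -- Hölder
  set Q' : ℝ := Real.conjExponent Q with hQ'
  have hconj : Q.HolderConjugate Q' := Real.HolderConjugate.conjExponent hQ1
  obtain ⟨B, hB⟩ := isCompact_Icc.exists_bound_of_continuousOn hf
  have hgmem : MemLp g (ENNReal.ofReal Q) (volume.restrict R) := by
    apply MemLp.of_bound (hgcont.aestronglyMeasurable hRmeas) (2 * B)
    refine (ae_restrict_iff' hRmeas).2 (ae_of_all _ fun z hz => ?_)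
    have h1 := hB z.1 (hmaps1 hz)
    have h2 := hB z.2 (hmaps2 hz)
    rw [Real.norm_eq_abs] at *
    rw [hg, abs_abs]
    calc |f z.1 - f z.2| ≤ |f z.1| + |f z.2| := abs_sub _ _
      _ ≤ 2 * B := by linarith
  have holder : ∫ z in R, g z ≤
      (∫ z in R, g z ^ Q) ^ (1 / Q) * (∫ _z in R, (1:ℝ) ^ Q') ^ (1 / Q') := by
    have := integral_mul_le_Lp_mul_Lq_of_nonneg (μ := volume.restrict R) hconj
      (ae_of_all _ hgnonneg) (ae_of_all _ fun _ => zero_le_one)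
      hgmem (memLp_const (1:ℝ))
    simpa using this
  have hone : (∫ _z in R, (1:ℝ) ^ Q') = V := by
    simp [Real.one_rpow, hvolR, measureReal_def]
  -- rewrite g ^ Q as the (2p)-th power
  have hgq : ∀ z : ℝ × ℝ, g z ^ Q = (f z.1 - f z.2) ^ (2 * p) := fun z => by
    rw [hg, hQ, show (2 * (p:ℝ)) = ((2 * p : ℕ) : ℝ) by push_cast; ring,
      Real.rpow_natCast, Even.pow_abs (even_two_mul p)]
  have hgQint : (∫ z in R, g z ^ Q) = ∫ z in R, (f z.1 - f z.2) ^ (2 * p) := by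
    apply integral_congr_ae
    exact ae_of_all _ fun z => hgq z
  -- kernel bound
  have hpw : ∀ z ∈ R, (f z.1 - f z.2) ^ (2 * p) ≤ (d - c) ^ e * K z := by
    intro z hz
    rcases eq_or_ne z.1 z.2 with h | h
    · have h2p : 2 * p ≠ 0 := by positivity
      rw [hKdef]
      simp only [h, sub_self, zero_pow h2p, zero_div, mul_zero, le_refl]
    · have habs : 0 < |z.1 - z.2| := abs_pos.2 (sub_ne_zero.2 h)
      have hle : |z.1 - z.2| ≤ d - c := by
        have hz1 := hz.1
        have hz2 := hz.2
        rw [abs_sub_le_iff]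
        constructor <;>
          [linarith [hz1.1, hz1.2, hz2.1, hz2.2]; linarith [hz1.1, hz1.2, hz2.1, hz2.2]]
      have hcancel : K z * |z.1 - z.2| ^ e = (f z.1 - f z.2) ^ (2 * p) := by
        rw [hKdef]
        exact div_mul_cancel₀ _ (by positivity)
      calc (f z.1 - f z.2) ^ (2 * p) = K z * |z.1 - z.2| ^ e := hcancel.symm
        _ ≤ K z * (d - c) ^ e := by
            exact mul_le_mul_of_nonneg_left (Real.rpow_le_rpow habs.le hle he0.le) (hKnonneg z)
        _ = (d - c) ^ e * K z := mul_comm _ _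
  have hint_pow : IntegrableOn (fun z : ℝ × ℝ => (f z.1 - f z.2) ^ (2 * p)) R :=
    (hcont.pow _).integrableOn_compact hRcomp
  have hKint : IntegrableOn K R := hK.mono_set hRsub
  have h3 : (∫ z in R, (f z.1 - f z.2) ^ (2 * p)) ≤ (d - c) ^ e * ∫ z in R, K z := by
    calc (∫ z in R, (f z.1 - f z.2) ^ (2 * p)) ≤ ∫ z in R, (d - c) ^ e * K z :=
          setIntegral_mono_on hint_pow (hKint.const_mul _) hRmeas hpw
      _ = (d - c) ^ e * ∫ z in R, K z := integral_const_mul _ _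
  have h4 : (∫ z in R, K z) ≤ N := setIntegral_mono_set hK
    (ae_of_all _ fun z => hKnonneg z) (HasSubset.Subset.eventuallyLE hRsub)
  have h5 : (∫ z in R, g z ^ Q) ≤ (d - c) ^ e * N := by
    rw [hgQint]
    calc (∫ z in R, (f z.1 - f z.2) ^ (2 * p)) ≤ (d - c) ^ e * ∫ z in R, K z := h3
      _ ≤ (d - c) ^ e * N := by
          exact mul_le_mul_of_nonneg_left h4 (Real.rpow_nonneg hdc.le _)
  have h6 : (∫ z in R, g z ^ Q) ^ (1 / Q) ≤ (d - c) ^ (γ + 1 / (p:ℝ)) * N ^ (1 / Q) := by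
    have h0 : 0 ≤ ∫ z in R, g z ^ Q :=
      setIntegral_nonneg hRmeas fun z _ => Real.rpow_nonneg (hgnonneg z) _
    calc (∫ z in R, g z ^ Q) ^ (1 / Q) ≤ ((d - c) ^ e * N) ^ (1 / Q) :=
          Real.rpow_le_rpow h0 h5 (by positivity)
      _ = ((d - c) ^ e) ^ (1 / Q) * N ^ (1 / Q) :=
          Real.mul_rpow (Real.rpow_nonneg hdc.le _) hN0
      _ = (d - c) ^ (γ + 1 / (p:ℝ)) * N ^ (1 / Q) := by
          rw [← Real.rpow_mul hdc.le]
          congr 1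
          rw [he, hQ]
          field_simp
  -- assemble
  rw [key, abs_mul, abs_of_nonneg (inv_nonneg.2 hV0.le)]
  have habsint : |∫ z in R, (f z.1 - f z.2)| ≤ ∫ z in R, g z := by
    have := norm_integral_le_integral_norm (μ := volume.restrict R)
      (fun z : ℝ × ℝ => f z.1 - f z.2)
    simpa [hg, Real.norm_eq_abs] using this
  have hmain : |∫ z in R, (f z.1 - f z.2)| ≤
      (d - c) ^ (γ + 1 / (p:ℝ)) * N ^ (1 / Q) * V ^ (1 / Q') := by
    calc |∫ z in R, (f z.1 - f z.2)| ≤ ∫ z in R, g z := habsint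
      _ ≤ (∫ z in R, g z ^ Q) ^ (1 / Q) * (∫ _z in R, (1:ℝ) ^ Q') ^ (1 / Q') := holder
      _ ≤ ((d - c) ^ (γ + 1 / (p:ℝ)) * N ^ (1 / Q)) * V ^ (1 / Q') := by
          rw [hone]
          exact mul_le_mul_of_nonneg_right h6 (Real.rpow_nonneg hV0.le _)
  have hVpow : V⁻¹ * V ^ (1 / Q') = V ^ (-(1 / Q)) := by
    rw [show V⁻¹ = V ^ (-1 : ℝ) by rw [Real.rpow_neg_one], ← Real.rpow_add hV0]
    congr 1
    have h1 : 1 / Q' = 1 - 1 / Q := by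
      rw [one_div, one_div, ← hconj.one_sub_inv]
    rw [h1]; ring
  calc V⁻¹ * |∫ z in R, (f z.1 - f z.2)| ≤
        V⁻¹ * ((d - c) ^ (γ + 1 / (p:ℝ)) * N ^ (1 / Q) * V ^ (1 / Q')) :=
        mul_le_mul_of_nonneg_left hmain (inv_nonneg.2 hV0.le)
    _ = (V⁻¹ * V ^ (1 / Q')) * ((d - c) ^ (γ + 1 / (p:ℝ)) * N ^ (1 / Q)) := by ring
    _ = V ^ (-(1 / Q)) * ((d - c) ^ (γ + 1 / (p:ℝ)) * N ^ (1 / Q)) := by rw [hVpow]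
    _ = V ^ (-(1 / Q)) * (d - c) ^ (γ + 1 / (p:ℝ)) * N ^ (1 / Q) := by ring

private lemma garsia_tele (γ : ℝ) (hγ0 : 0 < γ) (hγ1 : γ < 1) (p : ℕ) (hp : 1 ≤ p) (f : ℝ → ℝ)
    (hf : ContinuousOn f (Icc 0 1))
    (hK : IntegrableOn
        (fun q : ℝ × ℝ => (f q.1 - f q.2) ^ (2 * p) / |q.1 - q.2| ^ (2 * (p:ℝ) * γ + 2))
        (Icc (0:ℝ) 1 ×ˢ Icc (0:ℝ) 1))
    (a b : ℕ → ℝ) (δ : ℝ) (hδ : 0 < δ) (w : ℝ)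
    (h0 : ∀ n, 0 ≤ a n) (h1 : ∀ n, b n ≤ 1)
    (hmono : ∀ n, a n ≤ a (n + 1)) (hmono' : ∀ n, b (n + 1) ≤ b n)
    (hlen : ∀ n, b n - a n = δ / 2 ^ n) (hw : ∀ n, w ∈ Icc (a n) (b n)) :
    |f w - (b 0 - a 0)⁻¹ * ∫ x in Icc (a 0) (b 0), f x| ≤
      (2 / (1 - (2:ℝ) ^ (-γ))) * δ ^ γ *
        (∫ q in Icc (0:ℝ) 1 ×ˢ Icc (0:ℝ) 1,
          (f q.1 - f q.2) ^ (2 * p) / |q.1 - q.2| ^ (2 * (p:ℝ) * γ + 2)) ^ (1 / (2 * (p:ℝ))) := by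
  have hp0 : (0:ℝ) < p := by exact_mod_cast hp
  have hp1 : (1:ℝ) ≤ p := by exact_mod_cast hp
  set N : ℝ := ∫ q in Icc (0:ℝ) 1 ×ˢ Icc (0:ℝ) 1,
    (f q.1 - f q.2) ^ (2 * p) / |q.1 - q.2| ^ (2 * (p:ℝ) * γ + 2) with hN
  have hN0 : 0 ≤ N := setIntegral_nonneg (measurableSet_Icc.prod measurableSet_Icc)
    (fun z _ => div_nonneg (Even.pow_nonneg (even_two_mul p) _)
      (Real.rpow_nonneg (abs_nonneg _) _))
  set M : ℝ := N ^ (1 / (2 * (p:ℝ))) with hM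
  have hM0 : 0 ≤ M := Real.rpow_nonneg hN0 _
  set r : ℝ := (2:ℝ) ^ (-γ) with hr
  have hr0 : 0 < r := Real.rpow_pos_of_pos two_pos _
  have hr1 : r < 1 := Real.rpow_lt_one_of_one_lt_of_neg one_lt_two (by linarith)
  have hab : ∀ n, a n < b n := fun n => by
    have := hlen n
    have h2 : (0:ℝ) < δ / 2 ^ n := by positivity
    linarith
  set A : ℕ → ℝ := fun n => (b n - a n)⁻¹ * ∫ x in Icc (a n) (b n), f x with hA
  -- each step
  have hstep : ∀ n, dist (A n) (A (n + 1)) ≤ 2 * δ ^ γ * M * r ^ n := by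
    intro n
    have hsub1 : a n ≤ a (n + 1) := hmono n
    have hsub2 : b (n + 1) ≤ b n := hmono' n
    have hd := garsia_avg_diff γ hγ0 p hp f hf hK (h0 n) hsub1 (hab (n + 1)) hsub2 (h1 n)
    rw [dist_comm, Real.dist_eq]
    rw [← hN] at hd
    refine le_trans hd ?_
    -- now pure computation
    have hl1 : b (n + 1) - a (n + 1) = δ / 2 ^ (n + 1) := hlen (n + 1)
    have hl2 : b n - a n = δ / 2 ^ n := hlen n
    rw [hl1, hl2]
    set ℓ : ℝ := δ / 2 ^ n with hℓ
    have hℓ0 : 0 < ℓ := by positivity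
    have hhalf : δ / 2 ^ (n + 1) = ℓ / 2 := by rw [hℓ]; ring
    rw [hhalf]
    rw [← hM]
    set x : ℝ := -(1 / (2 * (p:ℝ))) with hx
    have hx2 : -x = 1 / (2 * (p:ℝ)) := by rw [hx]; ring
    have e1 : (ℓ / 2 * ℓ) ^ x * ℓ ^ (γ + 1 / (p:ℝ)) =
        (2:ℝ) ^ (1 / (2 * (p:ℝ))) * ℓ ^ γ := by
      have h2x : (2:ℝ) ^ x = ((2:ℝ) ^ (1 / (2 * (p:ℝ))))⁻¹ := by
        rw [hx, Real.rpow_neg (by norm_num : (0:ℝ) ≤ 2)]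
      calc (ℓ / 2 * ℓ) ^ x * ℓ ^ (γ + 1 / (p:ℝ))
          = (ℓ ^ x / 2 ^ x * ℓ ^ x) * ℓ ^ (γ + 1 / (p:ℝ)) := by
            rw [Real.mul_rpow (by positivity) hℓ0.le, Real.div_rpow hℓ0.le (by norm_num)]
        _ = (ℓ ^ x * ℓ ^ x * ℓ ^ (γ + 1 / (p:ℝ))) / 2 ^ x := by ring
        _ = ℓ ^ (x + x + (γ + 1 / (p:ℝ))) / 2 ^ x := by
            rw [← Real.rpow_add hℓ0, ← Real.rpow_add hℓ0]
        _ = ℓ ^ γ / 2 ^ x := by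
            rw [show x + x + (γ + 1 / (p:ℝ)) = γ by rw [hx]; field_simp; ring]
        _ = (2:ℝ) ^ (1 / (2 * (p:ℝ))) * ℓ ^ γ := by
            rw [h2x, div_inv_eq_mul]; ring
    have hℓγ : ℓ ^ γ = δ ^ γ * r ^ n := by
      have h2n : ((2:ℝ) ^ n) ^ γ = (2:ℝ) ^ ((n:ℝ) * γ) := by
        rw [← Real.rpow_natCast (2:ℝ) n, ← Real.rpow_mul (by norm_num : (0:ℝ) ≤ 2)]
      have hrn : r ^ n = (2:ℝ) ^ (-((n:ℝ) * γ)) := by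
        rw [hr, ← Real.rpow_natCast ((2:ℝ) ^ (-γ)) n,
          ← Real.rpow_mul (by norm_num : (0:ℝ) ≤ 2)]
        congr 1; ring
      rw [hℓ, Real.div_rpow hδ.le (by positivity), h2n, hrn,
        Real.rpow_neg (by norm_num : (0:ℝ) ≤ 2), div_eq_mul_inv]
    have h2le : (2:ℝ) ^ (1 / (2 * (p:ℝ))) ≤ 2 := by
      calc (2:ℝ) ^ (1 / (2 * (p:ℝ))) ≤ (2:ℝ) ^ (1:ℝ) := by
            apply Real.rpow_le_rpow_of_exponent_le one_le_two
            rw [div_le_one (by positivity)]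
            linarith
        _ = 2 := Real.rpow_one 2
    rw [e1, hℓγ]
    calc (2:ℝ) ^ (1 / (2 * (p:ℝ))) * (δ ^ γ * r ^ n) * M
        = (δ ^ γ * r ^ n * M) * (2:ℝ) ^ (1 / (2 * (p:ℝ))) := by ring
      _ ≤ (δ ^ γ * r ^ n * M) * 2 := by
          apply mul_le_mul_of_nonneg_left h2le
          exact mul_nonneg (mul_nonneg (Real.rpow_nonneg hδ.le _) (pow_nonneg hr0.le _)) hM0
      _ = 2 * δ ^ γ * M * r ^ n := by ring
  have hsum : ∀ n, dist (A 0) (A n) ≤ 2 * δ ^ γ * M * (1 - r)⁻¹ := by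
    intro n
    have hc0 : 0 ≤ 2 * δ ^ γ * M :=
      mul_nonneg (mul_nonneg (by norm_num) (Real.rpow_nonneg hδ.le _)) hM0
    calc dist (A 0) (A n) ≤ ∑ i ∈ Finset.range n, dist (A i) (A (i + 1)) :=
          dist_le_range_sum_dist A n
      _ ≤ ∑ i ∈ Finset.range n, 2 * δ ^ γ * M * r ^ i :=
          Finset.sum_le_sum fun i _ => hstep i
      _ = 2 * δ ^ γ * M * ∑ i ∈ Finset.range n, r ^ i := by rw [Finset.mul_sum]
      _ ≤ 2 * δ ^ γ * M * (1 - r)⁻¹ := by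
          refine mul_le_mul_of_nonneg_left ?_ hc0
          calc (∑ i ∈ Finset.range n, r ^ i) ≤ ∑' i : ℕ, r ^ i :=
                Summable.sum_le_tsum _ (fun i _ => pow_nonneg hr0.le i)
                  (summable_geometric_of_lt_one hr0.le hr1)
            _ = (1 - r)⁻¹ := tsum_geometric_of_lt_one hr0.le hr1
  have hw01 : w ∈ Icc (0:ℝ) 1 :=
    ⟨le_trans (h0 0) (hw 0).1, le_trans (hw 0).2 (h1 0)⟩
  have hconv : Filter.Tendsto A Filter.atTop (nhds (f w)) := by
    rw [Metric.tendsto_atTop]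
    intro ε hε
    have hcw : ContinuousWithinAt f (Icc 0 1) w := hf w hw01
    rw [Metric.continuousWithinAt_iff] at hcw
    obtain ⟨η, hη0, hη⟩ := hcw (ε / 2) (by linarith)
    obtain ⟨n₀, hn₀⟩ : ∃ n₀ : ℕ, δ / 2 ^ n₀ < η := by
      obtain ⟨m, hm⟩ := exists_pow_lt_of_lt_one (div_pos hη0 hδ)
        (by norm_num : (1:ℝ) / 2 < 1)
      refine ⟨m, ?_⟩
      have h2 : δ * ((1:ℝ) / 2) ^ m < δ * (η / δ) := mul_lt_mul_of_pos_left hm hδ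
      have h3 : δ * (η / δ) = η := by field_simp
      have h4 : δ / 2 ^ m = δ * ((1:ℝ) / 2) ^ m := by rw [div_pow, one_pow]; ring
      linarith
    refine ⟨n₀, fun n hn => ?_⟩
    have hmono2 : (2:ℝ) ^ n₀ ≤ 2 ^ n := by
      exact pow_le_pow_right₀ one_le_two hn
    have hlt : δ / 2 ^ n < η :=
      lt_of_le_of_lt (div_le_div_of_nonneg_left hδ.le (by positivity) hmono2) hn₀
    have hab' := hab n
    have hIcc_sub : Icc (a n) (b n) ⊆ Icc (0:ℝ) 1 := Icc_subset_Icc (h0 n) (h1 n)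
    have hvol : volume (Icc (a n) (b n)) < ⊤ := measure_Icc_lt_top
    have hbound : ∀ x ∈ Icc (a n) (b n), ‖f x - f w‖ ≤ ε / 2 := by
      intro x hx
      have hx01 : x ∈ Icc (0:ℝ) 1 := hIcc_sub hx
      have hwn := hw n
      have hdist : dist x w < η := by
        rw [Real.dist_eq, abs_sub_lt_iff]
        have := hlen n
        constructor <;> [nlinarith [hx.1, hx.2, hwn.1, hwn.2]; nlinarith [hx.1, hx.2, hwn.1, hwn.2]]
      have := hη hx01 hdist
      rw [Real.dist_eq] at this
      rw [Real.norm_eq_abs]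
      linarith
    have hfint : IntegrableOn f (Icc (a n) (b n)) :=
      (hf.mono hIcc_sub).integrableOn_compact isCompact_Icc
    have hlen' : (volume (Icc (a n) (b n))).toReal = b n - a n := by
      rw [Real.volume_Icc, ENNReal.toReal_ofReal (by linarith [hab n])]
    have hAn : A n - f w = (b n - a n)⁻¹ * ∫ x in Icc (a n) (b n), (f x - f w) := by
      rw [integral_sub hfint (integrableOn_const hvol.ne), integral_const,
        smul_eq_mul, measureReal_restrict_apply_univ, measureReal_def, hlen']
      have hne : b n - a n ≠ 0 := by linarith [hab n]
      simp only [hA]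
      field_simp
    have hd2 : dist (A n) (f w) ≤ ε / 2 := by
      rw [Real.dist_eq, hAn, abs_mul, abs_of_nonneg (inv_nonneg.2 (by linarith [hab n]))]
      have hbnd := norm_setIntegral_le_of_norm_le_const hvol hbound
      rw [Real.norm_eq_abs] at hbnd
      rw [measureReal_def, hlen'] at hbnd
      calc (b n - a n)⁻¹ * |∫ x in Icc (a n) (b n), (f x - f w)|
          ≤ (b n - a n)⁻¹ * (ε / 2 * (b n - a n)) := by
            exact mul_le_mul_of_nonneg_left hbnd (inv_nonneg.2 (by linarith [hab n]))
        _ = ε / 2 := by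
            have hne : b n - a n ≠ 0 := by linarith [hab n]
            field_simp
    calc dist (A n) (f w) ≤ ε / 2 := hd2
      _ < ε := by linarith
  have hfinal : dist (f w) (A 0) ≤ 2 * δ ^ γ * M * (1 - r)⁻¹ := by
    have htend : Filter.Tendsto (fun n => dist (A 0) (A n)) Filter.atTop
        (nhds (dist (A 0) (f w))) := tendsto_const_nhds.dist hconv
    rw [dist_comm]
    exact le_of_tendsto' htend hsum
  have hgoal : |f w - (b 0 - a 0)⁻¹ * ∫ x in Icc (a 0) (b 0), f x| = dist (f w) (A 0) := by
    rw [Real.dist_eq]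
  rw [hgoal]
  calc dist (f w) (A 0) ≤ 2 * δ ^ γ * M * (1 - r)⁻¹ := hfinal
    _ = 2 / (1 - r) * δ ^ γ * M := by ring

/-- Garsia's lemma: if `2pγ > 1`, the γ-Hölder seminorm of a continuous function on
`[0,1]` is controlled by the Sobolev–Garsia norm
`‖f‖_{γ,p} = (∫∫ (f(ζ)-f(η))^{2p}/|ζ-η|^{2pγ+2} dζdη)^{1/(2p)}`. -/
theorem stmt6 (γ : ℝ) (hγ : γ ∈ Set.Ioo (0:ℝ) 1) (p : ℕ) (hp : 1 ≤ p)
    (hpγ : 1 < 2 * (p : ℝ) * γ) :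
    ∃ C > 0, ∀ f : ℝ → ℝ, ContinuousOn f (Icc 0 1) →
      IntegrableOn
        (fun q : ℝ × ℝ => (f q.1 - f q.2) ^ (2 * p) / |q.1 - q.2| ^ (2 * (p:ℝ) * γ + 2))
        (Icc (0:ℝ) 1 ×ˢ Icc (0:ℝ) 1) →
      ∀ s t : ℝ, 0 ≤ s → s < t → t ≤ 1 →
        |f t - f s| / (t - s) ^ γ ≤
          C * (∫ q in Icc (0:ℝ) 1 ×ˢ Icc (0:ℝ) 1,
                (f q.1 - f q.2) ^ (2 * p) / |q.1 - q.2| ^ (2 * (p:ℝ) * γ + 2))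
              ^ (1 / (2 * (p:ℝ))) := by
  obtain ⟨hγ0, hγ1⟩ := hγ
  have hr0 : 0 < (2:ℝ) ^ (-γ) := Real.rpow_pos_of_pos two_pos _
  have hr1 : (2:ℝ) ^ (-γ) < 1 :=
    Real.rpow_lt_one_of_one_lt_of_neg one_lt_two (by linarith)
  refine ⟨4 / (1 - (2:ℝ) ^ (-γ)), div_pos (by norm_num) (by linarith), ?_⟩
  intro f hf hK s t hs hst ht
  set δ : ℝ := t - s with hδdef
  have hδ : 0 < δ := by rw [hδdef]; linarith
  set N : ℝ := ∫ q in Icc (0:ℝ) 1 ×ˢ Icc (0:ℝ) 1,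
    (f q.1 - f q.2) ^ (2 * p) / |q.1 - q.2| ^ (2 * (p:ℝ) * γ + 2) with hN
  set M : ℝ := N ^ (1 / (2 * (p:ℝ))) with hM
  have hside : ∀ n : ℕ, δ / 2 ^ n ≤ δ :=
    fun n => div_le_self hδ.le (one_le_pow₀ one_le_two)
  have hhalf : ∀ n : ℕ, δ / 2 ^ (n + 1) ≤ δ / 2 ^ n := fun n => by
    apply div_le_div_of_nonneg_left hδ.le (by positivity)
    exact pow_le_pow_right₀ one_le_two (Nat.le_succ n)
  have hpos : ∀ n : ℕ, 0 < δ / 2 ^ n := fun n => by positivity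
  -- t-side
  have hT := garsia_tele γ hγ0 hγ1 p hp f hf hK
    (fun n => t - δ / 2 ^ n) (fun _ => t) δ hδ t
    (fun n => by beta_reduce; have := hside n; rw [hδdef] at this ⊢; linarith)
    (fun _ => ht)
    (fun n => by beta_reduce; linarith [hhalf n])
    (fun _ => le_refl t)
    (fun n => by beta_reduce; ring)
    (fun n => ⟨by beta_reduce; linarith [hpos n], le_refl t⟩)
  -- s-side
  have hS := garsia_tele γ hγ0 hγ1 p hp f hf hK
    (fun _ => s) (fun n => s + δ / 2 ^ n) δ hδ s
    (fun _ => hs)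
    (fun n => by beta_reduce; have := hside n; rw [hδdef] at this ⊢; linarith)
    (fun _ => le_refl s)
    (fun n => by beta_reduce; linarith [hhalf n])
    (fun n => by beta_reduce; ring)
    (fun n => ⟨le_refl s, by beta_reduce; linarith [hpos n]⟩)
  simp only [pow_zero, div_one] at hT hS
  have e0 : t - δ = s := by rw [hδdef]; ring
  have e1 : s + δ = t := by rw [hδdef]; ring
  rw [e0] at hT
  rw [e1] at hS
  have e2 : t - s = δ := by rw [hδdef]
  rw [e2] at hT
  rw [e2] at hS
  rw [← hN, ← hM] at hT hS
  -- combine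
  set A : ℝ := δ⁻¹ * ∫ x in Icc s t, f x with hA
  have htri : |f t - f s| ≤ |f t - A| + |f s - A| := by
    calc |f t - f s| ≤ |f t - A| + |A - f s| := abs_sub_le _ _ _
      _ = |f t - A| + |f s - A| := by rw [abs_sub_comm A (f s)]
  have hMnonneg : 0 ≤ M := by
    rw [hM]
    apply Real.rpow_nonneg
    exact setIntegral_nonneg (measurableSet_Icc.prod measurableSet_Icc)
      (fun z _ => div_nonneg (Even.pow_nonneg (even_two_mul p) _)
        (Real.rpow_nonneg (abs_nonneg _) _))
  have hbound : |f t - f s| ≤ 4 / (1 - (2:ℝ) ^ (-γ)) * δ ^ γ * M := by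
    calc |f t - f s| ≤ |f t - A| + |f s - A| := htri
      _ ≤ 2 / (1 - (2:ℝ) ^ (-γ)) * δ ^ γ * M + 2 / (1 - (2:ℝ) ^ (-γ)) * δ ^ γ * M := by
          exact add_le_add hT hS
      _ = 4 / (1 - (2:ℝ) ^ (-γ)) * δ ^ γ * M := by ring
  rw [div_le_iff₀ (Real.rpow_pos_of_pos hδ γ)]
  calc |f t - f s| ≤ 4 / (1 - (2:ℝ) ^ (-γ)) * δ ^ γ * M := hbound
    _ = 4 / (1 - (2:ℝ) ^ (-γ)) * M * δ ^ γ := by ring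
end

section
/- Let f ∈ C^γ([0,1]) and g ∈ C^κ([0,1]) with γ + κ > 1. Then for 0 ≤ s ≤ t ≤ 1, the Young integral satisfies the sharp bound |∫_s^t g_ξ df_ξ| ≤ |g_s| ‖f‖_γ (t-s)^γ + c_{γ,κ} ‖f‖_γ ‖g‖_κ (t-s)^{γ+κ}, where c_{γ,κ} depends only on γ and κ. -/
open MeasureTheory Set

/-- Sup norm over `[0,1]`. -/
noncomputable def supNorm01 (f : ℝ → ℝ) : ℝ :=
  sSup {y : ℝ | ∃ t ∈ Icc (0:ℝ) 1, y = |f t|}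

/-- The set of Hölder quotients of `f` on `[0,1]`. -/
def holderQuot (κ : ℝ) (f : ℝ → ℝ) : Set ℝ :=
  {y : ℝ | ∃ s t : ℝ, 0 ≤ s ∧ s < t ∧ t ≤ 1 ∧ y = |f t - f s| / (t - s) ^ κ}

/-- κ-Hölder seminorm on `[0,1]`. -/
noncomputable def holderSemi (κ : ℝ) (f : ℝ → ℝ) : ℝ := sSup (holderQuot κ f)

/-- κ-Hölder norm `‖f‖_κ = ‖f‖_∞ + Hölder seminorm` on `[0,1]`. -/
noncomputable def holderNorm (κ : ℝ) (f : ℝ → ℝ) : ℝ := supNorm01 f + holderSemi κ f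

/-- `f` belongs to `C^κ([0,1])`. -/
def HolderOn01 (κ : ℝ) (f : ℝ → ℝ) : Prop :=
  ContinuousOn f (Icc 0 1) ∧ BddAbove (holderQuot κ f)

/-- `IsYoungIntegral g f s t I` : the Riemann sums `∑ g(π i)(f(π(i+1)) - f(π i))`
along partitions of `[s,t]` converge to `I` as the mesh tends to `0`
(Young integral `∫_s^t g dξ f = I`). -/
def IsYoungIntegral (g f : ℝ → ℝ) (s t I : ℝ) : Prop :=
  ∀ ε > (0:ℝ), ∃ δ > (0:ℝ), ∀ (n : ℕ) (π : ℕ → ℝ),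
    π 0 = s → π n = t → (∀ i < n, π i < π (i + 1)) →
    (∀ i < n, π (i + 1) - π i < δ) →
    |(∑ i ∈ Finset.range n, g (π i) * (f (π (i + 1)) - f (π i))) - I| < ε

lemma holder_bound {κ : ℝ} {f : ℝ → ℝ} (hf : BddAbove (holderQuot κ f))
    {a b : ℝ} (ha : 0 ≤ a) (hab : a < b) (hb : b ≤ 1) :
    |f b - f a| ≤ holderSemi κ f * (b - a) ^ κ := by
  have hpos : (0:ℝ) < (b - a) ^ κ := Real.rpow_pos_of_pos (by linarith) κ
  have h : |f b - f a| / (b - a) ^ κ ≤ holderSemi κ f :=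
    le_csSup hf ⟨a, b, ha, hab, hb, rfl⟩
  calc |f b - f a| = |f b - f a| / (b-a)^κ * (b-a)^κ := by field_simp
    _ ≤ _ := mul_le_mul_of_nonneg_right h hpos.le

lemma holderSemi_nonneg {κ : ℝ} {f : ℝ → ℝ} (hf : BddAbove (holderQuot κ f)) :
    0 ≤ holderSemi κ f := by
  have h := le_csSup hf (show |f 1 - f 0| / (1 - 0) ^ κ ∈ holderQuot κ f from
    ⟨0, 1, le_rfl, one_pos, le_rfl, rfl⟩)
  exact le_trans (by positivity) h

lemma supNorm01_nonneg {f : ℝ → ℝ} (hf : ContinuousOn f (Icc 0 1)) : 0 ≤ supNorm01 f := by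
  have hbdd : BddAbove {y : ℝ | ∃ t ∈ Icc (0:ℝ) 1, y = |f t|} := by
    have hset : {y : ℝ | ∃ t ∈ Icc (0:ℝ) 1, y = |f t|} = (fun t => |f t|) '' Icc 0 1 := by
      ext y; constructor
      · rintro ⟨t, ht, rfl⟩; exact ⟨t, ht, rfl⟩
      · rintro ⟨t, ht, rfl⟩; exact ⟨t, ht, rfl⟩
    rw [hset]
    exact (isCompact_Icc.image_of_continuousOn hf.abs).bddAbove
  exact le_trans (abs_nonneg (f 0)) (le_csSup hbdd ⟨0, by simp, rfl⟩)

lemma mono_part {n : ℕ} {π : ℕ → ℝ} (hinc : ∀ i < n, π i < π (i+1)) :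
    ∀ i j, i ≤ j → j ≤ n → π i ≤ π j := by
  intro i j hij hjn
  induction j with
  | zero => interval_cases i; exact le_rfl
  | succ k ih =>
    rcases Nat.eq_or_lt_of_le hij with h|h
    · rw [h]
    · exact le_trans (ih (Nat.lt_succ_iff.mp h) (by omega)) (hinc k (by omega)).le

lemma riemann_close (γ κ : ℝ) (hγ0 : 0 < γ) (hκ0 : 0 < κ)
    (f g : ℝ → ℝ) (hf : BddAbove (holderQuot γ f)) (hg : BddAbove (holderQuot κ g)) :
    ∀ n : ℕ, ∀ s t : ℝ, ∀ π : ℕ → ℝ, 0 ≤ s → t ≤ 1 → π 0 = s → π n = t →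
      (∀ i < n, π i < π (i+1)) →
      |(∑ i ∈ Finset.range n, g (π i) * (f (π (i+1)) - f (π i))) - g s * (f t - f s)|
        ≤ holderSemi γ f * holderSemi κ g * (2*(t-s))^(γ+κ) *
            ∑ k ∈ Finset.Icc 1 (n-1), ((k:ℝ))^(-(γ+κ)) := by
  intro n
  induction n with
  | zero =>
    intro s t π hs ht h0 hn hinc
    have hst : s = t := by rw [← h0, hn]
    simp [hst]
  | succ m IH =>
    intro s t π hs ht h0 hn hinc
    rcases Nat.eq_zero_or_pos m with hm | hm
    · subst hm
      have h1 : π 1 = t := hn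
      rw [Finset.sum_range_one, h0, h1, show (1:ℕ) - 1 = 0 from rfl,
        Finset.Icc_eq_empty (by omega), Finset.sum_empty, mul_zero, sub_self, abs_zero]
    -- m ≥ 1
    have hmono := mono_part hinc
    have hst : s < t := by
      rw [← h0, ← hn]
      exact lt_of_lt_of_le (hinc 0 (by omega)) (hmono 1 (m+1) (by omega) le_rfl)
    -- pigeonhole
    have hsum : ∑ j ∈ Finset.range m, (π (j+2) - π j) ≤ ∑ j ∈ Finset.range m, (2*(t-s)/m) := by
      have e1 : ∑ j ∈ Finset.range m, (π (j+2) - π j)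
          = (π (m+1) - π 1) + (π m - π 0) := by
        have : ∀ j, π (j+2) - π j = (π (j+2) - π (j+1)) + (π (j+1) - π j) := by
          intro j; ring
        rw [Finset.sum_congr rfl (fun j _ => this j), Finset.sum_add_distrib,
          Finset.sum_range_sub (fun i => π (i+1)), Finset.sum_range_sub π]
      have h1 : s ≤ π 1 := h0 ▸ hmono 0 1 (by omega) (by omega)
      have h2 : π m ≤ t := hn ▸ hmono m (m+1) (by omega) le_rfl
      have e2 : ∑ j ∈ Finset.range m, (2*(t-s)/m) = 2*(t-s) := by
        rw [Finset.sum_const, Finset.card_range, nsmul_eq_mul]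
        field_simp
      rw [e1, e2, h0, hn]
      linarith
    obtain ⟨j0, hj0mem, hj0⟩ := Finset.exists_le_of_sum_le ⟨0, Finset.mem_range.mpr hm⟩ hsum
    have hj0m : j0 < m := Finset.mem_range.mp hj0mem
    set π' : ℕ → ℝ := fun i => if i ≤ j0 then π i else π (i+1) with hπ'
    have hπ'0 : π' 0 = s := by simp [hπ', h0]
    have hπ'm : π' m = t := by
      simp only [hπ', if_neg (by omega : ¬ m ≤ j0)]; exact hn
    have hπ'inc : ∀ i < m, π' i < π' (i+1) := by
      intro i hi
      rcases lt_trichotomy i j0 with h | h | h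
      · simp only [hπ', if_pos h.le, if_pos (by omega : i+1 ≤ j0)]
        exact hinc i (by omega)
      · subst h
        simp only [hπ', if_pos le_rfl, if_neg (by omega : ¬ i+1 ≤ i)]
        exact lt_trans (hinc i (by omega)) (hinc (i+1) (by omega))
      · simp only [hπ', if_neg (by omega : ¬ i ≤ j0), if_neg (by omega : ¬ i+1 ≤ j0)]
        exact hinc (i+1) (by omega)
    set T : ℕ → ℝ := fun i => g (π i) * (f (π (i+1)) - f (π i)) with hT
    set T' : ℕ → ℝ := fun i => g (π' i) * (f (π' (i+1)) - f (π' i)) with hT'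
    have hsplit : ∑ i ∈ Finset.range (m+1), T i - ∑ i ∈ Finset.range m, T' i
        = (g (π (j0+1)) - g (π j0)) * (f (π (j0+2)) - f (π (j0+1))) := by
      have d1 : ∑ i ∈ Finset.range (j0+2), T i + ∑ i ∈ Finset.Ico (j0+2) (m+1), T i
          = ∑ i ∈ Finset.range (m+1), T i := Finset.sum_range_add_sum_Ico T (by omega)
      have d2 : ∑ i ∈ Finset.range (j0+1), T' i + ∑ i ∈ Finset.Ico (j0+1) m, T' i
          = ∑ i ∈ Finset.range m, T' i := Finset.sum_range_add_sum_Ico T' (by omega)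
      have e3 : ∑ i ∈ Finset.range (j0+2), T i
          = ∑ i ∈ Finset.range j0, T i + T j0 + T (j0+1) := by
        rw [Finset.sum_range_succ, Finset.sum_range_succ]
      have e4 : ∑ i ∈ Finset.range (j0+1), T' i
          = ∑ i ∈ Finset.range j0, T i + T' j0 := by
        rw [Finset.sum_range_succ]
        congr 1
        apply Finset.sum_congr rfl
        intro i hi
        have hi' : i < j0 := Finset.mem_range.mp hi
        simp only [hT', hT, hπ', if_pos hi'.le, if_pos (by omega : i+1 ≤ j0)]
      have e5 : ∑ i ∈ Finset.Ico (j0+1) m, T' i = ∑ i ∈ Finset.Ico (j0+2) (m+1), T i := by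
        rw [Finset.sum_Ico_eq_sum_range, Finset.sum_Ico_eq_sum_range]
        have hcard : m - (j0+1) = m + 1 - (j0+2) := by omega
        rw [← hcard]
        apply Finset.sum_congr rfl
        intro i _
        simp only [hT', hT, hπ', if_neg (by omega : ¬ j0+1+i ≤ j0),
          if_neg (by omega : ¬ j0+1+i+1 ≤ j0)]
        simp only [show j0 + 1 + i + 1 = j0 + 2 + i from by omega]
      have e6 : T' j0 = g (π j0) * (f (π (j0+2)) - f (π j0)) := by
        simp only [hT', hπ', if_pos le_rfl, if_neg (by omega : ¬ j0+1 ≤ j0)]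
      rw [← d1, ← d2, e3, e4, e5, e6]
      simp only [hT]
      ring
    -- bound the removal term
    have hK0 : 0 ≤ holderSemi γ f := holderSemi_nonneg hf
    have hK0' : 0 ≤ holderSemi κ g := holderSemi_nonneg hg
    have hd0 : 0 ≤ π j0 :=
      le_trans hs (by rw [← h0]; exact hmono 0 j0 (by omega) (by omega))
    have hd1 : π (j0+2) ≤ 1 := le_trans (hn ▸ hmono (j0+2) (m+1) (by omega) le_rfl) ht
    have hgap1 : π j0 < π (j0+1) := hinc j0 (by omega)
    have hgap2 : π (j0+1) < π (j0+2) := hinc (j0+1) (by omega)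
    have hrem : |(g (π (j0+1)) - g (π j0)) * (f (π (j0+2)) - f (π (j0+1)))|
        ≤ holderSemi γ f * holderSemi κ g * (2*(t-s))^(γ+κ) * ((m:ℝ))^(-(γ+κ)) := by
      rw [abs_mul]
      have b1 : |g (π (j0+1)) - g (π j0)| ≤ holderSemi κ g * (π (j0+1) - π j0) ^ κ :=
        holder_bound hg hd0 hgap1 (by linarith)
      have b2 : |f (π (j0+2)) - f (π (j0+1))| ≤ holderSemi γ f * (π (j0+2) - π (j0+1)) ^ γ :=
        holder_bound hf (by linarith) hgap2 hd1
      set d := π (j0+2) - π j0 with hd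
      have hdpos : 0 < d := by simp only [hd]; linarith
      have c1 : (π (j0+1) - π j0) ^ κ ≤ d ^ κ :=
        Real.rpow_le_rpow (by linarith) (by simp only [hd]; linarith) hκ0.le
      have c2 : (π (j0+2) - π (j0+1)) ^ γ ≤ d ^ γ :=
        Real.rpow_le_rpow (by linarith) (by simp only [hd]; linarith) hγ0.le
      have step1 : |g (π (j0+1)) - g (π j0)| * |f (π (j0+2)) - f (π (j0+1))|
          ≤ (holderSemi κ g * d ^ κ) * (holderSemi γ f * d ^ γ) := by
        apply mul_le_mul (b1.trans (by nlinarith [Real.rpow_nonneg (by linarith : (0:ℝ) ≤ π (j0+1) - π j0) κ]))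
          (b2.trans (by nlinarith [Real.rpow_nonneg (by linarith : (0:ℝ) ≤ π (j0+2) - π (j0+1)) γ]))
          (abs_nonneg _)
        positivity
      have step2 : (holderSemi κ g * d ^ κ) * (holderSemi γ f * d ^ γ)
          = holderSemi γ f * holderSemi κ g * d ^ (γ+κ) := by
        rw [Real.rpow_add hdpos]; ring
      have hmpos : (0:ℝ) < m := by exact_mod_cast hm
      have step3 : d ^ (γ+κ) ≤ (2*(t-s))^(γ+κ) * ((m:ℝ))^(-(γ+κ)) := by
        have : d ≤ 2*(t-s)/m := hj0
        calc d ^ (γ+κ) ≤ (2*(t-s)/m) ^ (γ+κ) :=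
              Real.rpow_le_rpow hdpos.le this (by linarith)
          _ = (2*(t-s))^(γ+κ) * ((m:ℝ))^(-(γ+κ)) := by
              rw [Real.div_rpow (by linarith) hmpos.le, Real.rpow_neg hmpos.le, div_eq_mul_inv]
      calc |g (π (j0+1)) - g (π j0)| * |f (π (j0+2)) - f (π (j0+1))|
          ≤ (holderSemi κ g * d ^ κ) * (holderSemi γ f * d ^ γ) := step1
        _ = holderSemi γ f * holderSemi κ g * d ^ (γ+κ) := step2
        _ ≤ holderSemi γ f * holderSemi κ g * ((2*(t-s))^(γ+κ) * ((m:ℝ))^(-(γ+κ))) := by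
            apply mul_le_mul_of_nonneg_left step3 (by positivity)
        _ = holderSemi γ f * holderSemi κ g * (2*(t-s))^(γ+κ) * ((m:ℝ))^(-(γ+κ)) := by ring
    -- use IH
    have hIH := IH s t π' hs ht hπ'0 hπ'm hπ'inc
    have hIccsplit : ∑ k ∈ Finset.Icc 1 (m+1-1), ((k:ℝ))^(-(γ+κ))
        = ∑ k ∈ Finset.Icc 1 (m-1), ((k:ℝ))^(-(γ+κ)) + ((m:ℝ))^(-(γ+κ)) := by
      have h9 : m - 1 + 1 = m := by omega
      rw [show m + 1 - 1 = (m - 1) + 1 from by omega, Finset.sum_Icc_succ_top (by omega), h9]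
    calc |(∑ i ∈ Finset.range (m+1), T i) - g s * (f t - f s)|
        ≤ |(∑ i ∈ Finset.range (m+1), T i) - ∑ i ∈ Finset.range m, T' i|
          + |(∑ i ∈ Finset.range m, T' i) - g s * (f t - f s)| := by
          exact abs_sub_le _ _ _
      _ ≤ holderSemi γ f * holderSemi κ g * (2*(t-s))^(γ+κ) * ((m:ℝ))^(-(γ+κ))
          + holderSemi γ f * holderSemi κ g * (2*(t-s))^(γ+κ) *
            ∑ k ∈ Finset.Icc 1 (m-1), ((k:ℝ))^(-(γ+κ)) := by
          apply add_le_add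
          · rw [hsplit]; exact hrem
          · exact hIH
      _ = holderSemi γ f * holderSemi κ g * (2*(t-s))^(γ+κ) *
            ∑ k ∈ Finset.Icc 1 (m+1-1), ((k:ℝ))^(-(γ+κ)) := by
          rw [hIccsplit]; ring

/-- Sharp estimate for the Young integral:
`|∫_s^t g df| ≤ |g_s| ‖f‖_γ (t-s)^γ + c_{γ,κ} ‖f‖_γ ‖g‖_κ (t-s)^{γ+κ}`. -/
theorem stmt8 (γ κ : ℝ) (hγ : γ ∈ Set.Ioo (0:ℝ) 1) (hκ : κ ∈ Set.Ioo (0:ℝ) 1)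
    (hγκ : 1 < γ + κ) :
    ∃ c > 0, ∀ f g : ℝ → ℝ, HolderOn01 γ f → HolderOn01 κ g →
      ∀ s t I : ℝ, 0 ≤ s → s ≤ t → t ≤ 1 →
        IsYoungIntegral g f s t I →
        |I| ≤ |g s| * holderNorm γ f * (t - s) ^ γ +
          c * holderNorm γ f * holderNorm κ g * (t - s) ^ (γ + κ) := by
  have hsummable : Summable (fun k : ℕ => ((k:ℝ))^(-(γ+κ))) :=
    Real.summable_nat_rpow.mpr (by linarith)
  set C0 : ℝ := ∑' k : ℕ, ((k:ℝ))^(-(γ+κ)) with hC0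
  have hC0nn : 0 ≤ C0 := tsum_nonneg (fun k => Real.rpow_nonneg (Nat.cast_nonneg k) _)
  refine ⟨2^(γ+κ) * (1 + C0), by positivity, ?_⟩
  intro f g hfH hgH s t I hs hst ht hI
  obtain ⟨hfc, hfB⟩ := hfH
  obtain ⟨hgc, hgB⟩ := hgH
  have hsf : 0 ≤ holderSemi γ f := holderSemi_nonneg hfB
  have hsg : 0 ≤ holderSemi κ g := holderSemi_nonneg hgB
  have hSf : 0 ≤ supNorm01 f := supNorm01_nonneg hfc
  have hSg : 0 ≤ supNorm01 g := supNorm01_nonneg hgc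
  have hnf : holderSemi γ f ≤ holderNorm γ f := le_add_of_nonneg_left hSf
  have hng : holderSemi κ g ≤ holderNorm κ g := le_add_of_nonneg_left hSg
  have hnf0 : 0 ≤ holderNorm γ f := add_nonneg hSf hsf
  have hng0 : 0 ≤ holderNorm κ g := add_nonneg hSg hsg
  rcases eq_or_lt_of_le hst with rfl | hst'
  · -- s = t
    have hI0 : I = 0 := by
      by_contra hne
      obtain ⟨δ, hδ, h⟩ := hI |I| (abs_pos.mpr hne)
      have := h 0 (fun _ => s) rfl rfl (by omega) (by omega)
      simp at this
    simp [hI0, sub_self, Real.zero_rpow (ne_of_gt hγ.1),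
      Real.zero_rpow (show γ + κ ≠ 0 by linarith)]
  · -- s < t
    have hts : 0 < t - s := by linarith
    set B : ℝ := holderSemi γ f * holderSemi κ g * (2*(t-s))^(γ+κ) * (1 + C0) with hB
    have hkey : |I - g s * (f t - f s)| ≤ B := by
      apply le_of_forall_pos_le_add
      intro ε hε
      obtain ⟨δ, hδ, h⟩ := hI ε hε
      set n : ℕ := ⌈(t-s)/δ⌉₊ + 1 with hn
      have hn0 : (0:ℝ) < n := by positivity
      set π : ℕ → ℝ := fun i => s + i * ((t-s)/n) with hπ
      have hstep : 0 < (t-s)/n := div_pos hts hn0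
      have hπ0 : π 0 = s := by simp [hπ]
      have hπn : π n = t := by
        simp only [hπ]
        field_simp
        ring
      have hπinc : ∀ i < n, π i < π (i+1) := by
        intro i _
        simp only [hπ, Nat.cast_add, Nat.cast_one]
        have h1 : ((i:ℝ)) * ((t-s)/(n:ℝ)) < ((i:ℝ)+1) * ((t-s)/(n:ℝ)) :=
          mul_lt_mul_of_pos_right (by linarith) hstep
        linarith
      have hmesh : ∀ i < n, π (i+1) - π i < δ := by
        intro i _
        have heq : π (i+1) - π i = (t-s)/n := by
          simp only [hπ]; push_cast; ring
        rw [heq, div_lt_iff₀ hn0]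
        have h1 : (t-s)/δ ≤ (⌈(t-s)/δ⌉₊ : ℝ) := Nat.le_ceil _
        have h2 : ((⌈(t-s)/δ⌉₊ : ℝ)) < (n:ℝ) := by
          simp only [hn]; push_cast; linarith
        have : (t-s)/δ < n := lt_of_le_of_lt h1 h2
        rw [div_lt_iff₀ hδ] at this
        linarith [this]
      have hclose := h n π hπ0 hπn hπinc hmesh
      have hRS := riemann_close γ κ hγ.1 hκ.1 f g hfB hgB n s t π hs ht hπ0 hπn hπinc
      have hsum : ∑ k ∈ Finset.Icc 1 (n-1), ((k:ℝ))^(-(γ+κ)) ≤ C0 :=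
        Summable.sum_le_tsum _ (fun i _ => Real.rpow_nonneg (Nat.cast_nonneg i) _) hsummable
      have hfac : 0 ≤ holderSemi γ f * holderSemi κ g * (2*(t-s))^(γ+κ) := by positivity
      calc |I - g s * (f t - f s)|
          ≤ |I - (∑ i ∈ Finset.range n, g (π i) * (f (π (i+1)) - f (π i)))|
            + |(∑ i ∈ Finset.range n, g (π i) * (f (π (i+1)) - f (π i))) - g s * (f t - f s)| :=
            abs_sub_le _ _ _
        _ ≤ ε + holderSemi γ f * holderSemi κ g * (2*(t-s))^(γ+κ) *
              ∑ k ∈ Finset.Icc 1 (n-1), ((k:ℝ))^(-(γ+κ)) := by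
            apply add_le_add
            · rw [abs_sub_comm]; exact hclose.le
            · exact hRS
        _ ≤ B + ε := by
            have : holderSemi γ f * holderSemi κ g * (2*(t-s))^(γ+κ) *
                ∑ k ∈ Finset.Icc 1 (n-1), ((k:ℝ))^(-(γ+κ))
                ≤ holderSemi γ f * holderSemi κ g * (2*(t-s))^(γ+κ) * (1 + C0) :=
              mul_le_mul_of_nonneg_left (by linarith) hfac
            simp only [hB]; linarith
    have hfirst : |g s * (f t - f s)| ≤ |g s| * holderNorm γ f * (t-s)^γ := by
      rw [abs_mul]
      have h1 : |f t - f s| ≤ holderSemi γ f * (t-s)^γ := holder_bound hfB hs hst' ht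
      have h2 : holderSemi γ f * (t-s)^γ ≤ holderNorm γ f * (t-s)^γ :=
        mul_le_mul_of_nonneg_right hnf (Real.rpow_nonneg hts.le _)
      calc |g s| * |f t - f s| ≤ |g s| * (holderNorm γ f * (t-s)^γ) :=
            mul_le_mul_of_nonneg_left (h1.trans h2) (abs_nonneg _)
        _ = |g s| * holderNorm γ f * (t-s)^γ := by ring
    have hBle : B ≤ 2^(γ+κ)*(1+C0) * holderNorm γ f * holderNorm κ g * (t-s)^(γ+κ) := by
      have hmr : (2*(t-s))^(γ+κ) = 2^(γ+κ) * (t-s)^(γ+κ) :=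
        Real.mul_rpow (by norm_num) hts.le
      rw [hB, hmr]
      have hrp : (0:ℝ) ≤ (t-s)^(γ+κ) := Real.rpow_nonneg hts.le _
      have h2p : (0:ℝ) ≤ 2^(γ+κ) := Real.rpow_nonneg (by norm_num) _
      nlinarith [mul_le_mul hnf hng hsg hnf0,
        mul_nonneg (mul_nonneg h2p (by linarith : (0:ℝ) ≤ 1 + C0)) hrp,
        mul_le_mul_of_nonneg_left (mul_le_mul hnf hng hsg hnf0)
          (mul_nonneg (mul_nonneg h2p (by linarith : (0:ℝ) ≤ 1 + C0)) hrp)]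
    calc |I| = |g s * (f t - f s) + (I - g s * (f t - f s))| := by ring_nf
      _ ≤ |g s * (f t - f s)| + |I - g s * (f t - f s)| := abs_add_le _ _
      _ ≤ |g s| * holderNorm γ f * (t-s)^γ +
          2^(γ+κ)*(1+C0) * holderNorm γ f * holderNorm κ g * (t-s)^(γ+κ) :=
        add_le_add hfirst (hkey.trans hBle)
end

section
/- Let γ ∈ (0,1), p ≥ 1, and define for a continuous f : [0,1] → ℝ the quantity U_{γ,p}(f) = ( ∫_0^1 ∫_v^{min(4v,1)} |f(u)-f(v)|^{2p} / (u-v)^{2γp+2} du dv )^{1/(2p)}. If U_{γ,p}(f) < ∞, then f is γ-Hölder continuous on [0,1] and there is a universal constant c > 0 with ‖f‖_γ ≤ c · U_{γ,p}(f). -/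
open MeasureTheory Set

/-- The region `{(v,u) : v ∈ [0,1], v ≤ u ≤ min(4v,1)}` of the modified Garsia functional. -/
def garsiaRegion : Set (ℝ × ℝ) :=
  {q : ℝ × ℝ | q.1 ∈ Icc (0:ℝ) 1 ∧ q.1 ≤ q.2 ∧ q.2 ≤ min (4 * q.1) 1}


noncomputable def garsiaF (γ : ℝ) (p : ℕ) (f : ℝ → ℝ) (q : ℝ × ℝ) : ℝ :=
  |f q.2 - f q.1| ^ (2 * p) / (q.2 - q.1) ^ (2 * (p:ℝ) * γ + 2)

noncomputable def garsiaI (γ : ℝ) (p : ℕ) (f : ℝ → ℝ) : ℝ :=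
  ∫ q in garsiaRegion, garsiaF γ p f q

lemma isClosed_garsiaRegion : IsClosed garsiaRegion := by
  have h : garsiaRegion = ((fun q : ℝ × ℝ => q.1) ⁻¹' Icc 0 1) ∩
      ({q : ℝ × ℝ | q.1 ≤ q.2} ∩ {q : ℝ × ℝ | q.2 ≤ min (4 * q.1) 1}) := by
    ext q; rfl
  rw [h]
  exact (isClosed_Icc.preimage continuous_fst).inter
    ((isClosed_le continuous_fst continuous_snd).inter
      (isClosed_le continuous_snd (by fun_prop)))

lemma garsiaF_nonneg (γ : ℝ) (p : ℕ) (f : ℝ → ℝ) {q : ℝ × ℝ} (hq : q.1 ≤ q.2) :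
    0 ≤ garsiaF γ p f q :=
  div_nonneg (pow_nonneg (abs_nonneg _) _) (Real.rpow_nonneg (sub_nonneg.2 hq) _)

lemma garsiaI_nonneg (γ : ℝ) (p : ℕ) (f : ℝ → ℝ) : 0 ≤ garsiaI γ p f :=
  setIntegral_nonneg isClosed_garsiaRegion.measurableSet
    (fun q hq => garsiaF_nonneg γ p f hq.2.1)

lemma garsia_pair {γ : ℝ} {p : ℕ} {f : ℝ → ℝ} (hγ0 : 0 < γ) (hp : 1 ≤ p)
    (hf : ContinuousOn f (Icc 0 1))
    (hInt : IntegrableOn (garsiaF γ p f) garsiaRegion)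
    {c d c' d' : ℝ} (hc : 0 ≤ c) (hcd : c < d) (hdc' : d ≤ c') (hcd' : c' < d')
    (hd1 : d' ≤ 1) (h4 : d' ≤ 4 * c) :
    |(⨍ y in Icc c' d', f y) - ⨍ x in Icc c d, f x| ^ (2 * p)
      ≤ (d' - c) ^ (2 * (p:ℝ) * γ + 2) / ((d - c) * (d' - c')) * garsiaI γ p f := by
  set P : Set (ℝ × ℝ) := Icc c d ×ˢ Icc c' d' with hPdef
  have hsub1 : Icc c d ⊆ Icc (0:ℝ) 1 := Icc_subset_Icc hc (le_trans (hdc'.trans hcd'.le) hd1)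
  have hsub2 : Icc c' d' ⊆ Icc (0:ℝ) 1 := Icc_subset_Icc (hc.trans (hcd.le.trans hdc')) hd1
  have hPR : P ⊆ garsiaRegion := by
    rintro ⟨x, y⟩ ⟨hx, hy⟩
    simp only [mem_Icc] at hx hy
    refine ⟨⟨hx.1.trans' hc, hx.2.trans (le_trans (hdc'.trans hcd'.le) hd1)⟩,
      (hx.2.trans hdc').trans hy.1, le_min ?_ (hy.2.trans hd1)⟩
    calc y ≤ d' := hy.2
      _ ≤ 4 * c := h4
      _ ≤ 4 * x := by nlinarith [hx.1]
  have hPc : IsCompact P := isCompact_Icc.prod isCompact_Icc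
  have hPm : MeasurableSet P := (measurableSet_Icc).prod measurableSet_Icc
  have hgc : ContinuousOn (fun q : ℝ × ℝ => f q.2 - f q.1) P := by
    have h2 : ContinuousOn (fun q : ℝ × ℝ => f q.2) P :=
      hf.comp continuous_snd.continuousOn (fun q hq => hsub2 hq.2)
    have h1 : ContinuousOn (fun q : ℝ × ℝ => f q.1) P :=
      hf.comp continuous_fst.continuousOn (fun q hq => hsub1 hq.1)
    exact h2.sub h1
  have hgint : IntegrableOn (fun q : ℝ × ℝ => f q.2 - f q.1) P := hgc.integrableOn_compact hPc
  have hGint : IntegrableOn (fun q : ℝ × ℝ => |f q.2 - f q.1| ^ (2 * p)) P :=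
    ((hgc.abs).pow _).integrableOn_compact hPc
  have hm1 : 0 < d - c := sub_pos.2 hcd
  have hm2 : 0 < d' - c' := sub_pos.2 hcd'
  have hvol : volume P = ENNReal.ofReal (d - c) * ENNReal.ofReal (d' - c') := by
    rw [hPdef, Measure.volume_eq_prod, Measure.prod_prod, Real.volume_Icc, Real.volume_Icc]
  have hvtR : (volume P).toReal = (d - c) * (d' - c') := by
    rw [hvol, ENNReal.toReal_mul, ENNReal.toReal_ofReal hm1.le, ENNReal.toReal_ofReal hm2.le]
  haveI : IsFiniteMeasure (volume.restrict P) :=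
    ⟨by rw [Measure.restrict_apply_univ, hvol]
        exact ENNReal.mul_lt_top ENNReal.ofReal_lt_top ENNReal.ofReal_lt_top⟩
  haveI : NeZero (volume.restrict P) := by
    refine ⟨fun h => ?_⟩
    have h2 := congrArg (fun μ : Measure (ℝ × ℝ) => μ univ) h
    simp only [Measure.restrict_apply_univ, Measure.coe_zero, Pi.zero_apply] at h2
    rw [hvol] at h2
    simp only [mul_eq_zero, ENNReal.ofReal_eq_zero] at h2
    rcases h2 with h1 | h1 <;> linarith
  have hfJ : IntegrableOn f (Icc c d) := (hf.mono hsub1).integrableOn_Icc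
  have hfJ' : IntegrableOn f (Icc c' d') := (hf.mono hsub2).integrableOn_Icc
  have hId : (∫ q in P, (f q.2 - f q.1)) =
      (d - c) * (∫ y in Icc c' d', f y) - (d' - c') * ∫ x in Icc c d, f x := by
    rw [Measure.volume_eq_prod] at hgint ⊢
    rw [setIntegral_prod _ hgint]
    have hinner : ∀ x : ℝ, (∫ y in Icc c' d', (f y - f x)) =
        (∫ y in Icc c' d', f y) - (d' - c') * f x := by
      intro x
      rw [integral_sub hfJ' (integrableOn_const (by
        rw [Real.volume_Icc]; exact ENNReal.ofReal_lt_top.ne))]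
      rw [setIntegral_const, measureReal_def, Real.volume_Icc, ENNReal.toReal_ofReal hm2.le, smul_eq_mul]
    simp only [hinner]
    rw [integral_sub (integrableOn_const (C := ∫ y in Icc c' d', f y) (by
      rw [Real.volume_Icc]; exact ENNReal.ofReal_lt_top.ne)) (hfJ.const_mul (d' - c'))]
    rw [setIntegral_const, measureReal_def, Real.volume_Icc, ENNReal.toReal_ofReal hm1.le, smul_eq_mul,
      integral_const_mul]
  have hA : (⨍ x in Icc c d, f x) = (d - c)⁻¹ * ∫ x in Icc c d, f x := by
    rw [setAverage_eq, measureReal_def, Real.volume_Icc, ENNReal.toReal_ofReal hm1.le, smul_eq_mul]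
  have hA' : (⨍ y in Icc c' d', f y) = (d' - c')⁻¹ * ∫ y in Icc c' d', f y := by
    rw [setAverage_eq, measureReal_def, Real.volume_Icc, ENNReal.toReal_ofReal hm2.le, smul_eq_mul]
  have hAvg : (⨍ q in P, (f q.2 - f q.1)) =
      (⨍ y in Icc c' d', f y) - ⨍ x in Icc c d, f x := by
    rw [setAverage_eq, measureReal_def, hvtR, hId, hA, hA', smul_eq_mul]
    field_simp
  have habs : |(⨍ y in Icc c' d', f y) - ⨍ x in Icc c d, f x| ≤
      ⨍ q in P, |f q.2 - f q.1| := by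
    rw [← hAvg, setAverage_eq, setAverage_eq, measureReal_def, smul_eq_mul, smul_eq_mul, abs_mul,
      abs_of_nonneg (inv_nonneg.2 ENNReal.toReal_nonneg)]
    refine mul_le_mul_of_nonneg_left ?_ (inv_nonneg.2 ENNReal.toReal_nonneg)
    simpa [Real.norm_eq_abs] using
      norm_integral_le_integral_norm (μ := volume.restrict P) (fun q : ℝ × ℝ => f q.2 - f q.1)
  have hJen : (⨍ q in P, |f q.2 - f q.1|) ^ (2 * p) ≤
      ⨍ q in P, |f q.2 - f q.1| ^ (2 * p) := by
    have hconv : ConvexOn ℝ univ (fun x : ℝ => x ^ (2 * p)) := Even.convexOn_pow (even_two_mul p)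
    exact hconv.map_average_le (continuous_pow _).continuousOn isClosed_univ
      (ae_of_all _ fun _ => mem_univ _) hgint.abs hGint
  have step1 : |(⨍ y in Icc c' d', f y) - ⨍ x in Icc c d, f x| ^ (2 * p) ≤
      ⨍ q in P, |f q.2 - f q.1| ^ (2 * p) :=
    le_trans (pow_le_pow_left₀ (abs_nonneg _) habs _) hJen
  have hα : (0:ℝ) < 2 * (p:ℝ) * γ + 2 := by positivity
  have hδ : 0 ≤ d' - c := by linarith
  have hptwise : ∀ q ∈ P, |f q.2 - f q.1| ^ (2 * p) ≤
      (d' - c) ^ (2 * (p:ℝ) * γ + 2) * garsiaF γ p f q := by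
    intro q hq
    obtain ⟨hx, hy⟩ := hq
    simp only [mem_Icc] at hx hy
    have hxy : q.1 ≤ q.2 := (hx.2.trans hdc').trans hy.1
    rcases eq_or_lt_of_le hxy with heq | hlt
    · have h0 : |f q.2 - f q.1| ^ (2 * p) = 0 := by
        rw [← heq, sub_self, abs_zero, zero_pow (by omega)]
      rw [h0, garsiaF, h0, zero_div, mul_zero]
    · have hpos : (0:ℝ) < (q.2 - q.1) ^ (2 * (p:ℝ) * γ + 2) :=
        Real.rpow_pos_of_pos (sub_pos.2 hlt) _
      have hle : (q.2 - q.1) ^ (2 * (p:ℝ) * γ + 2) ≤ (d' - c) ^ (2 * (p:ℝ) * γ + 2) :=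
        Real.rpow_le_rpow (sub_nonneg.2 hlt.le) (by linarith [hx.1, hy.2]) hα.le
      rw [garsiaF]
      calc |f q.2 - f q.1| ^ (2 * p)
          = |f q.2 - f q.1| ^ (2 * p) / (q.2 - q.1) ^ (2 * (p:ℝ) * γ + 2) *
              (q.2 - q.1) ^ (2 * (p:ℝ) * γ + 2) := (div_mul_cancel₀ _ hpos.ne').symm
        _ ≤ |f q.2 - f q.1| ^ (2 * p) / (q.2 - q.1) ^ (2 * (p:ℝ) * γ + 2) *
              (d' - c) ^ (2 * (p:ℝ) * γ + 2) :=
            mul_le_mul_of_nonneg_left hle (div_nonneg (by positivity) hpos.le)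
        _ = _ := by ring
  have hFP : IntegrableOn (garsiaF γ p f) P := hInt.mono_set hPR
  have hint2 : ∫ q in P, |f q.2 - f q.1| ^ (2 * p) ≤
      (d' - c) ^ (2 * (p:ℝ) * γ + 2) * ∫ q in P, garsiaF γ p f q := by
    rw [← integral_const_mul]
    exact setIntegral_mono_on hGint (hFP.const_mul _) hPm hptwise
  have hint3 : (∫ q in P, garsiaF γ p f q) ≤ garsiaI γ p f := by
    refine setIntegral_mono_set hInt ?_ (HasSubset.Subset.eventuallyLE hPR)
    filter_upwards [ae_restrict_mem isClosed_garsiaRegion.measurableSet] with q hq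
    exact garsiaF_nonneg γ p f hq.2.1
  calc |(⨍ y in Icc c' d', f y) - ⨍ x in Icc c d, f x| ^ (2 * p)
      ≤ ⨍ q in P, |f q.2 - f q.1| ^ (2 * p) := step1
    _ = ((d - c) * (d' - c'))⁻¹ * ∫ q in P, |f q.2 - f q.1| ^ (2 * p) := by
        rw [setAverage_eq, measureReal_def, hvtR, smul_eq_mul]
    _ ≤ ((d - c) * (d' - c'))⁻¹ * ((d' - c) ^ (2 * (p:ℝ) * γ + 2) * garsiaI γ p f) := by
        refine mul_le_mul_of_nonneg_left ?_ (by positivity)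
        exact hint2.trans (mul_le_mul_of_nonneg_left hint3 (Real.rpow_nonneg hδ _))
    _ = _ := by ring

lemma garsia_step {γ : ℝ} {p : ℕ} {f : ℝ → ℝ} (hγ0 : 0 < γ) (hp : 1 ≤ p)
    (hf : ContinuousOn f (Icc 0 1))
    (hInt : IntegrableOn (garsiaF γ p f) garsiaRegion)
    {c d c' d' w : ℝ} (hc : 0 ≤ c) (hcd : c < d) (hdc' : d ≤ c') (hcd' : c' < d')
    (hd1 : d' ≤ 1) (h4 : d' ≤ 4 * c) (hw : d' - c ≤ w) (hw1 : w ≤ 4 * (d - c))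
    (hw2 : w ≤ 4 * (d' - c')) :
    |(⨍ y in Icc c' d', f y) - ⨍ x in Icc c d, f x| ≤
      16 * (garsiaI γ p f) ^ (1 / (2 * (p:ℝ))) * w ^ γ := by
  have hwpos : (0:ℝ) < w := lt_of_lt_of_le (by linarith) hw
  have hI0 : 0 ≤ garsiaI γ p f := garsiaI_nonneg γ p f
  have hα : (0:ℝ) < 2 * (p:ℝ) * γ + 2 := by positivity
  have hp0 : (p:ℝ) ≠ 0 := Nat.cast_ne_zero.2 (by omega)
  have key := garsia_pair hγ0 hp hf hInt hc hcd hdc' hcd' hd1 h4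
  have hsplit : w ^ (2 * (p:ℝ) * γ + 2) = w ^ (2 * (p:ℝ) * γ) * w ^ (2:ℕ) := by
    rw [Real.rpow_add hwpos, ← Real.rpow_natCast w 2]
    norm_num
  have hratio : (d' - c) ^ (2 * (p:ℝ) * γ + 2) / ((d - c) * (d' - c')) ≤
      16 * w ^ (2 * (p:ℝ) * γ) := by
    rw [div_le_iff₀ (by nlinarith)]
    have h1 : (d' - c) ^ (2 * (p:ℝ) * γ + 2) ≤ w ^ (2 * (p:ℝ) * γ + 2) :=
      Real.rpow_le_rpow (by linarith) hw hα.le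
    have h2 : w ^ (2:ℕ) ≤ 16 * ((d - c) * (d' - c')) := by nlinarith
    have h3 : (0:ℝ) ≤ w ^ (2 * (p:ℝ) * γ) := Real.rpow_nonneg hwpos.le _
    nlinarith [h1, h2, h3, hsplit]
  have hB : |(⨍ y in Icc c' d', f y) - ⨍ x in Icc c d, f x| ^ (2 * p) ≤
      16 * w ^ (2 * (p:ℝ) * γ) * garsiaI γ p f :=
    key.trans (mul_le_mul_of_nonneg_right hratio hI0)
  have hX0 : (0:ℝ) ≤ |(⨍ y in Icc c' d', f y) - ⨍ x in Icc c d, f x| := abs_nonneg _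
  have hroot : |(⨍ y in Icc c' d', f y) - ⨍ x in Icc c d, f x| ≤
      (16 * w ^ (2 * (p:ℝ) * γ) * garsiaI γ p f) ^ (1 / (2 * (p:ℝ))) := by
    have h2p : ((2 * p : ℕ) : ℝ) = 2 * (p:ℝ) := by push_cast; ring
    rw [show (1 / (2 * (p:ℝ))) = (((2*p : ℕ):ℝ))⁻¹ by rw [h2p, one_div]]
    calc |(⨍ y in Icc c' d', f y) - ⨍ x in Icc c d, f x|
        = (|(⨍ y in Icc c' d', f y) - ⨍ x in Icc c d, f x| ^ (2*p)) ^ (((2*p : ℕ):ℝ))⁻¹ :=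
          (Real.pow_rpow_inv_natCast hX0 (by omega)).symm
      _ ≤ (16 * w ^ (2 * (p:ℝ) * γ) * garsiaI γ p f) ^ (((2*p : ℕ):ℝ))⁻¹ :=
          Real.rpow_le_rpow (pow_nonneg hX0 _) hB (by positivity)
  refine hroot.trans ?_
  have hmul : (16 * w ^ (2 * (p:ℝ) * γ) * garsiaI γ p f) ^ (1 / (2 * (p:ℝ))) =
      (16:ℝ) ^ (1 / (2 * (p:ℝ))) * (w ^ (2 * (p:ℝ) * γ)) ^ (1 / (2 * (p:ℝ))) *
        (garsiaI γ p f) ^ (1 / (2 * (p:ℝ))) := by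
    rw [Real.mul_rpow (by positivity) hI0, Real.mul_rpow (by norm_num)
      (Real.rpow_nonneg hwpos.le _)]
  have hwγ : (w ^ (2 * (p:ℝ) * γ)) ^ (1 / (2 * (p:ℝ))) = w ^ γ := by
    rw [← Real.rpow_mul hwpos.le]
    congr 1
    field_simp
  rw [hmul, hwγ]
  have h16 : (16:ℝ) ^ (1 / (2 * (p:ℝ))) ≤ 16 := by
    have h1 : (1:ℝ) ≤ 2 * (p:ℝ) := by
      have : (1:ℝ) ≤ (p:ℝ) := by exact_mod_cast hp
      linarith
    calc (16:ℝ) ^ (1 / (2 * (p:ℝ))) ≤ (16:ℝ) ^ (1:ℝ) :=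
        Real.rpow_le_rpow_of_exponent_le (by norm_num)
          ((div_le_one (by linarith)).2 h1)
      _ = 16 := Real.rpow_one _
  have hwg0 : (0:ℝ) ≤ w ^ γ := Real.rpow_nonneg hwpos.le _
  have hI0' : (0:ℝ) ≤ (garsiaI γ p f) ^ (1 / (2 * (p:ℝ))) := Real.rpow_nonneg hI0 _
  have h160 : (0:ℝ) ≤ (16:ℝ) ^ (1 / (2 * (p:ℝ))) := Real.rpow_nonneg (by norm_num) _
  nlinarith [mul_le_mul_of_nonneg_right h16 (mul_nonneg hwg0 hI0')]

lemma garsia_geom_le {x : ℝ} (hx0 : 0 ≤ x) (hx1 : x < 1) (N : ℕ) :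
    ∑ k ∈ Finset.range N, x ^ k ≤ (1 - x)⁻¹ := by
  have h := geom_sum_mul x N
  have hxN : 0 ≤ x ^ N := pow_nonneg hx0 N
  have h1x : 0 < 1 - x := by linarith
  have h2 : (∑ k ∈ Finset.range N, x ^ k) * (1 - x) ≤ 1 := by nlinarith [h, hxN]
  calc (∑ k ∈ Finset.range N, x ^ k)
      = (∑ k ∈ Finset.range N, x ^ k) * (1 - x) * (1 - x)⁻¹ := by field_simp
    _ ≤ 1 * (1 - x)⁻¹ := mul_le_mul_of_nonneg_right h2 (inv_nonneg.2 h1x.le)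
    _ = (1 - x)⁻¹ := one_mul _

lemma garsia_telescope {A : ℕ → ℝ} {L C x : ℝ} (hx0 : 0 ≤ x) (hx1 : x < 1) (hC : 0 ≤ C)
    (hstep : ∀ k, dist (A k) (A (k + 1)) ≤ C * x ^ k)
    (hlim : Filter.Tendsto A Filter.atTop (nhds L)) :
    dist (A 0) L ≤ C * (1 - x)⁻¹ := by
  refine le_of_tendsto (tendsto_const_nhds.dist hlim) (Filter.Eventually.of_forall fun N => ?_)
  calc dist (A 0) (A N) ≤ ∑ k ∈ Finset.range N, dist (A k) (A (k + 1)) :=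
        dist_le_range_sum_dist A N
    _ ≤ ∑ k ∈ Finset.range N, C * x ^ k := Finset.sum_le_sum fun k _ => hstep k
    _ = C * ∑ k ∈ Finset.range N, x ^ k := by rw [Finset.mul_sum]
    _ ≤ C * (1 - x)⁻¹ := mul_le_mul_of_nonneg_left (garsia_geom_le hx0 hx1 N) hC

lemma garsia_avg_close {f : ℝ → ℝ} {u v C e' : ℝ} (huv : u < v)
    (hfi : IntegrableOn f (Icc u v)) (hb : ∀ y ∈ Icc u v, |f y - e'| ≤ C) :
    |(⨍ y in Icc u v, f y) - e'| ≤ C := by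
  have hm : (0:ℝ) < v - u := sub_pos.2 huv
  have hvol : volume (Icc u v) < ⊤ := by rw [Real.volume_Icc]; exact ENNReal.ofReal_lt_top
  have hsum : (∫ y in Icc u v, (f y - e')) = (∫ y in Icc u v, f y) - (v - u) * e' := by
    rw [integral_sub hfi (integrableOn_const hvol.ne), setIntegral_const,
      measureReal_def, Real.volume_Icc, ENNReal.toReal_ofReal hm.le, smul_eq_mul]
  have hkey : |(⨍ y in Icc u v, f y) - e'| = (v - u)⁻¹ * |∫ y in Icc u v, (f y - e')| := by
    rw [setAverage_eq, measureReal_def, Real.volume_Icc, ENNReal.toReal_ofReal hm.le, smul_eq_mul, hsum]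
    have h1 : ((v - u)⁻¹ * ∫ y in Icc u v, f y) - e' =
        (v - u)⁻¹ * ((∫ y in Icc u v, f y) - (v - u) * e') := by
      field_simp
    rw [h1, abs_mul, abs_of_nonneg (inv_nonneg.2 hm.le)]
  rw [hkey]
  have hnorm := norm_setIntegral_le_of_norm_le_const (μ := volume) (C := C) hvol
    (f := fun y => f y - e') (fun y hy => by
      rw [Real.norm_eq_abs]; exact hb y hy)
  rw [Real.norm_eq_abs, measureReal_def, Real.volume_Icc, ENNReal.toReal_ofReal hm.le] at hnorm
  calc (v - u)⁻¹ * |∫ y in Icc u v, (f y - e')| ≤ (v - u)⁻¹ * (C * (v - u)) :=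
      mul_le_mul_of_nonneg_left hnorm (inv_nonneg.2 hm.le)
    _ = C := by field_simp

lemma garsia_avg_tendsto {f : ℝ → ℝ} (hf : ContinuousOn f (Icc 0 1)) {e : ℝ}
    (he : e ∈ Icc (0:ℝ) 1) {u v : ℕ → ℝ} (hsub : ∀ k, Icc (u k) (v k) ⊆ Icc (0:ℝ) 1)
    (huv : ∀ k, u k < v k) {w : ℕ → ℝ}
    (hdist : ∀ k, ∀ y ∈ Icc (u k) (v k), |y - e| ≤ w k)
    (hw : Filter.Tendsto w Filter.atTop (nhds 0)) :
    Filter.Tendsto (fun k => ⨍ y in Icc (u k) (v k), f y) Filter.atTop (nhds (f e)) := by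
  rw [Metric.tendsto_atTop]
  intro ε hε
  have hc : ContinuousWithinAt f (Icc 0 1) e := hf e he
  rw [Metric.continuousWithinAt_iff] at hc
  obtain ⟨δ, hδ, hball⟩ := hc (ε/2) (by linarith)
  obtain ⟨N, hN⟩ := Filter.eventually_atTop.1 (hw.eventually (gt_mem_nhds hδ))
  refine ⟨N, fun k hk => ?_⟩
  have hbd : ∀ y ∈ Icc (u k) (v k), |f y - f e| ≤ ε/2 := by
    intro y hy
    have h1 : dist y e < δ := by
      rw [Real.dist_eq]
      exact lt_of_le_of_lt (hdist k y hy) (hN k hk)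
    have := hball (hsub k hy) h1
    rw [Real.dist_eq] at this
    exact this.le
  have havg := garsia_avg_close (huv k) ((hf.mono (hsub k)).integrableOn_Icc) hbd
  rw [Real.dist_eq]
  exact lt_of_le_of_lt havg (by linarith)

lemma garsia_rpow_pow {r : ℝ} (hr : 0 ≤ r) (γ : ℝ) (k : ℕ) :
    (r ^ k) ^ γ = (r ^ γ) ^ k := by
  rw [← Real.rpow_natCast r k, ← Real.rpow_mul hr, mul_comm, Real.rpow_mul hr,
    Real.rpow_natCast]

lemma garsia_sideA {γ : ℝ} {p : ℕ} {f : ℝ → ℝ} (hγ0 : 0 < γ) (hp : 1 ≤ p)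
    (hf : ContinuousOn f (Icc 0 1))
    (hInt : IntegrableOn (garsiaF γ p f) garsiaRegion)
    {a b : ℝ} (ha : 0 ≤ a) (hab : a < b) (hb1 : b ≤ 1) :
    dist (f a) (⨍ y in Icc ((a+b)/2) b, f y) ≤
      16 * (garsiaI γ p f) ^ (1/(2*(p:ℝ))) * (b-a) ^ γ * (1 - (2:ℝ)⁻¹ ^ γ)⁻¹ := by
  set ℓ := b - a with hℓdef
  have hℓ : 0 < ℓ := sub_pos.2 hab
  set r : ℝ := (2:ℝ)⁻¹ with hrdef
  have hr0 : (0:ℝ) < r := by norm_num [hrdef]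
  have hr1 : r < 1 := by norm_num [hrdef]
  set e : ℕ → ℝ := fun k => a + ℓ * r ^ k with hedef
  set A : ℕ → ℝ := fun k => ⨍ y in Icc (e (k+1)) (e k), f y with hAdef
  clear_value ℓ r e A
  have hrk : ∀ k : ℕ, 0 < r ^ k := fun k => pow_pos hr0 k
  have hrk1 : ∀ k : ℕ, r ^ k ≤ 1 := fun k => pow_le_one₀ hr0.le hr1.le
  have hlt : ∀ k, e (k+1) < e k := by
    intro k
    simp only [hedef]
    have h := pow_lt_pow_right_of_lt_one₀ hr0 hr1 (by omega : k < k + 1)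
    have := mul_lt_mul_of_pos_left h hℓ
    linarith
  have hea : ∀ k, a < e k := fun k => by
    simp only [hedef]; nlinarith [hrk k]
  have heb : ∀ k, e k ≤ b := fun k => by
    simp only [hedef]; nlinarith [hrk1 k]
  set x := r ^ γ with hxdef
  have hx0 : 0 ≤ x := Real.rpow_nonneg hr0.le _
  have hx1 : x < 1 := Real.rpow_lt_one hr0.le hr1 hγ0
  have hI'0 : 0 ≤ (garsiaI γ p f) ^ (1/(2*(p:ℝ))) := Real.rpow_nonneg (garsiaI_nonneg γ p f) _
  have hC0 : 0 ≤ 16 * (garsiaI γ p f) ^ (1/(2*(p:ℝ))) * ℓ ^ γ := by positivity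
  have hstep : ∀ k, dist (A k) (A (k+1)) ≤
      (16 * (garsiaI γ p f) ^ (1/(2*(p:ℝ))) * ℓ ^ γ) * x ^ k := by
    intro k
    have hpow2 : r ^ (k+2) = r ^ k * (1/4) := by rw [pow_add]; norm_num [hrdef]
    have hpow1 : r ^ (k+1) = r ^ k * (1/2) := by rw [pow_add]; norm_num [hrdef]
    have hq2 : ℓ * r ^ (k+2) = ℓ * r ^ k * (1/4) := by rw [hpow2]; ring
    have hq1 : ℓ * r ^ (k+1) = ℓ * r ^ k * (1/2) := by rw [hpow1]; ring
    have hlrk : 0 < ℓ * r ^ k := mul_pos hℓ (hrk k)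
    have hkey := garsia_step hγ0 hp hf hInt
      (c := e (k+2)) (d := e (k+1)) (c' := e (k+1)) (d' := e k) (w := ℓ * r ^ k)
      (by simp only [hedef]; linarith [hrk (k+2), mul_pos hℓ (hrk (k+2))])
      (hlt (k+1)) le_rfl (hlt k) ((heb k).trans hb1)
      (by simp only [hedef]; linarith [hq2])
      (by simp only [hedef]; linarith [hq2])
      (by simp only [hedef]; linarith [hq1, hq2])
      (by simp only [hedef]; linarith [hq1, hq2])
    have hw : (ℓ * r ^ k) ^ γ = ℓ ^ γ * x ^ k := by
      rw [Real.mul_rpow hℓ.le (hrk k).le, hxdef, garsia_rpow_pow hr0.le]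
    rw [Real.dist_eq]
    simp only [hAdef]
    calc |(⨍ y in Icc (e (k+1)) (e k), f y) - ⨍ y in Icc (e (k+2)) (e (k+1)), f y|
        ≤ 16 * (garsiaI γ p f) ^ (1/(2*(p:ℝ))) * (ℓ * r ^ k) ^ γ := hkey
      _ = 16 * (garsiaI γ p f) ^ (1/(2*(p:ℝ))) * ℓ ^ γ * x ^ k := by rw [hw]; ring
  have hlim : Filter.Tendsto A Filter.atTop (nhds (f a)) := by
    rw [hAdef]
    refine garsia_avg_tendsto hf ⟨ha, hab.le.trans hb1⟩
      (fun k => Icc_subset_Icc (ha.trans (hea (k+1)).le) ((heb k).trans hb1))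
      (fun k => hlt k) (w := fun k => ℓ * r ^ k) (fun k y hy => ?_) ?_
    · rw [abs_of_nonneg (by linarith [hy.1, hea (k+1)])]
      have h2 := hy.2
      simp only [hedef] at h2 ⊢
      linarith
    · have := (tendsto_pow_atTop_nhds_zero_of_lt_one hr0.le hr1).const_mul ℓ
      simpa using this
  have htel := garsia_telescope hx0 hx1 hC0 hstep hlim
  have hA0 : A 0 = ⨍ y in Icc ((a+b)/2) b, f y := by
    have h1 : a + ℓ * r ^ 1 = (a+b)/2 := by rw [hℓdef, hrdef]; ring
    have h0 : a + ℓ * r ^ 0 = b := by rw [hℓdef]; ring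
    simp only [hAdef, hedef, h1, h0]
  rw [dist_comm, ← hA0]
  calc dist (A 0) (f a) ≤ (16 * (garsiaI γ p f) ^ (1/(2*(p:ℝ))) * ℓ ^ γ) * (1 - x)⁻¹ := htel
    _ = 16 * (garsiaI γ p f) ^ (1/(2*(p:ℝ))) * ℓ ^ γ * (1 - x)⁻¹ := by ring

lemma garsia_sideB {γ : ℝ} {p : ℕ} {f : ℝ → ℝ} (hγ0 : 0 < γ) (hp : 1 ≤ p)
    (hf : ContinuousOn f (Icc 0 1))
    (hInt : IntegrableOn (garsiaF γ p f) garsiaRegion)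
    {a b : ℝ} (ha : 0 ≤ a) (hab : a < b) (hb1 : b ≤ 1) (h4ab : b ≤ 4 * a) :
    dist (f b) (⨍ y in Icc a ((a+b)/2), f y) ≤
      16 * (garsiaI γ p f) ^ (1/(2*(p:ℝ))) * (b-a) ^ γ * (1 - (2:ℝ)⁻¹ ^ γ)⁻¹ := by
  set ℓ := b - a with hℓdef
  have hℓ : 0 < ℓ := sub_pos.2 hab
  set r : ℝ := (2:ℝ)⁻¹ with hrdef
  have hr0 : (0:ℝ) < r := by norm_num [hrdef]
  have hr1 : r < 1 := by norm_num [hrdef]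
  set e : ℕ → ℝ := fun k => b - ℓ * r ^ k with hedef
  set A : ℕ → ℝ := fun k => ⨍ y in Icc (e k) (e (k+1)), f y with hAdef
  clear_value ℓ r e A
  have hb0 : (0:ℝ) ≤ b := ha.trans hab.le
  have hℓ3 : 4 * ℓ ≤ 3 * b := by rw [hℓdef]; linarith
  have hrk : ∀ k : ℕ, 0 < r ^ k := fun k => pow_pos hr0 k
  have hrk1 : ∀ k : ℕ, r ^ k ≤ 1 := fun k => pow_le_one₀ hr0.le hr1.le
  have hu : ∀ k : ℕ, ℓ * r ^ k ≤ ℓ := fun k => mul_le_of_le_one_right hℓ.le (hrk1 k)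
  have hlt : ∀ k, e k < e (k+1) := by
    intro k
    simp only [hedef]
    have h := pow_lt_pow_right_of_lt_one₀ hr0 hr1 (by omega : k < k + 1)
    have := mul_lt_mul_of_pos_left h hℓ
    linarith
  have hea : ∀ k, a ≤ e k := fun k => by
    simp only [hedef]; linarith [hu k, hℓdef.le, hℓdef.ge]
  have heb : ∀ k, e k < b := fun k => by
    simp only [hedef]; nlinarith [hrk k]
  set x := r ^ γ with hxdef
  have hx0 : 0 ≤ x := Real.rpow_nonneg hr0.le _
  have hx1 : x < 1 := Real.rpow_lt_one hr0.le hr1 hγ0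
  have hI'0 : 0 ≤ (garsiaI γ p f) ^ (1/(2*(p:ℝ))) := Real.rpow_nonneg (garsiaI_nonneg γ p f) _
  have hC0 : 0 ≤ 16 * (garsiaI γ p f) ^ (1/(2*(p:ℝ))) * ℓ ^ γ := by positivity
  have hstep : ∀ k, dist (A k) (A (k+1)) ≤
      (16 * (garsiaI γ p f) ^ (1/(2*(p:ℝ))) * ℓ ^ γ) * x ^ k := by
    intro k
    have hpow2 : r ^ (k+2) = r ^ k * (1/4) := by rw [pow_add, hrdef]; norm_num
    have hpow1 : r ^ (k+1) = r ^ k * (1/2) := by rw [pow_add, hrdef]; norm_num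
    have hq2 : ℓ * r ^ (k+2) = ℓ * r ^ k * (1/4) := by rw [hpow2]; ring
    have hq1 : ℓ * r ^ (k+1) = ℓ * r ^ k * (1/2) := by rw [hpow1]; ring
    have hlrk : 0 < ℓ * r ^ k := mul_pos hℓ (hrk k)
    have hkey := garsia_step hγ0 hp hf hInt
      (c := e k) (d := e (k+1)) (c' := e (k+1)) (d' := e (k+2)) (w := ℓ * r ^ k)
      (ha.trans (hea k)) (hlt k) le_rfl (hlt (k+1)) ((heb (k+2)).le.trans hb1)
      (by simp only [hedef]; linarith [hq2, hu k])
      (by simp only [hedef]; linarith [hq2])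
      (by simp only [hedef]; linarith [hq1, hq2])
      (by simp only [hedef]; linarith [hq1, hq2])
    have hw : (ℓ * r ^ k) ^ γ = ℓ ^ γ * x ^ k := by
      rw [Real.mul_rpow hℓ.le (hrk k).le, hxdef, garsia_rpow_pow hr0.le]
    rw [Real.dist_eq, abs_sub_comm]
    simp only [hAdef]
    calc |(⨍ y in Icc (e (k+1)) (e (k+2)), f y) - ⨍ y in Icc (e k) (e (k+1)), f y|
        ≤ 16 * (garsiaI γ p f) ^ (1/(2*(p:ℝ))) * (ℓ * r ^ k) ^ γ := hkey
      _ = 16 * (garsiaI γ p f) ^ (1/(2*(p:ℝ))) * ℓ ^ γ * x ^ k := by rw [hw]; ring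
  have hlim : Filter.Tendsto A Filter.atTop (nhds (f b)) := by
    rw [hAdef]
    refine garsia_avg_tendsto hf ⟨hb0, hb1⟩
      (fun k => Icc_subset_Icc (ha.trans (hea k)) ((heb (k+1)).le.trans hb1))
      (fun k => hlt k) (w := fun k => ℓ * r ^ k) (fun k y hy => ?_) ?_
    · rw [abs_of_nonpos (by linarith [hy.2, heb (k+1)])]
      have h1 := hy.1
      simp only [hedef] at h1 ⊢
      linarith
    · have := (tendsto_pow_atTop_nhds_zero_of_lt_one hr0.le hr1).const_mul ℓ
      simpa using this
  have htel := garsia_telescope hx0 hx1 hC0 hstep hlim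
  have hA0 : A 0 = ⨍ y in Icc a ((a+b)/2), f y := by
    have h0 : b - ℓ * r ^ 0 = a := by rw [hℓdef]; ring
    have h1 : b - ℓ * r ^ 1 = (a+b)/2 := by rw [hℓdef, hrdef]; ring
    simp only [hAdef, hedef, h0, h1]
  rw [dist_comm, ← hA0]
  calc dist (A 0) (f b) ≤ (16 * (garsiaI γ p f) ^ (1/(2*(p:ℝ))) * ℓ ^ γ) * (1 - x)⁻¹ := htel
    _ = 16 * (garsiaI γ p f) ^ (1/(2*(p:ℝ))) * ℓ ^ γ * (1 - x)⁻¹ := by ring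

lemma garsia_master {γ : ℝ} {p : ℕ} {f : ℝ → ℝ} (hγ0 : 0 < γ) (hp : 1 ≤ p)
    (hf : ContinuousOn f (Icc 0 1))
    (hInt : IntegrableOn (garsiaF γ p f) garsiaRegion)
    {a b : ℝ} (ha : 0 ≤ a) (hab : a < b) (hb1 : b ≤ 1) (h4 : b ≤ 4 * a) :
    |f b - f a| ≤ 48 * (1 - (2:ℝ)⁻¹ ^ γ)⁻¹ *
      (garsiaI γ p f) ^ (1/(2*(p:ℝ))) * (b-a) ^ γ := by
  set x := (2:ℝ)⁻¹ ^ γ with hxdef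
  have hx0 : 0 ≤ x := Real.rpow_nonneg (by norm_num) _
  have hx1 : x < 1 := Real.rpow_lt_one (by norm_num) (by norm_num) hγ0
  have h1x : 0 < 1 - x := by linarith
  have hS0 : 0 < (1 - x)⁻¹ := inv_pos.2 h1x
  have hS1 : 1 ≤ (1 - x)⁻¹ := by
    nlinarith [mul_inv_cancel₀ h1x.ne', hS0]
  have hI'0 : 0 ≤ (garsiaI γ p f) ^ (1/(2*(p:ℝ))) := Real.rpow_nonneg (garsiaI_nonneg γ p f) _
  have hℓγ : 0 ≤ (b - a) ^ γ := Real.rpow_nonneg (by linarith) _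
  have hmid : a < (a+b)/2 := by linarith
  have hmid' : (a+b)/2 < b := by linarith
  have hcross := garsia_step hγ0 hp hf hInt
    (c := a) (d := (a+b)/2) (c' := (a+b)/2) (d' := b) (w := b - a)
    ha hmid le_rfl hmid' hb1 h4 le_rfl (by linarith) (by linarith)
  have hA := garsia_sideA hγ0 hp hf hInt ha hab hb1
  have hB := garsia_sideB hγ0 hp hf hInt ha hab hb1 h4
  have htri : |f b - f a| ≤ dist (f b) (⨍ y in Icc a ((a+b)/2), f y) +
      dist (⨍ y in Icc a ((a+b)/2), f y) (⨍ y in Icc ((a+b)/2) b, f y) +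
      dist (⨍ y in Icc ((a+b)/2) b, f y) (f a) := by
    rw [← Real.dist_eq]
    exact dist_triangle4 _ _ _ _
  have hcross' : dist (⨍ y in Icc a ((a+b)/2), f y) (⨍ y in Icc ((a+b)/2) b, f y) ≤
      16 * (garsiaI γ p f) ^ (1/(2*(p:ℝ))) * (b-a) ^ γ := by
    rw [Real.dist_eq, abs_sub_comm]
    exact hcross
  have hAd : dist (⨍ y in Icc ((a+b)/2) b, f y) (f a) ≤
      16 * (garsiaI γ p f) ^ (1/(2*(p:ℝ))) * (b-a) ^ γ * (1 - x)⁻¹ := by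
    rw [dist_comm]; exact hA
  calc |f b - f a| ≤ _ := htri
    _ ≤ 16 * (garsiaI γ p f) ^ (1/(2*(p:ℝ))) * (b-a) ^ γ * (1 - x)⁻¹ +
        16 * (garsiaI γ p f) ^ (1/(2*(p:ℝ))) * (b-a) ^ γ +
        16 * (garsiaI γ p f) ^ (1/(2*(p:ℝ))) * (b-a) ^ γ * (1 - x)⁻¹ :=
      add_le_add (add_le_add hB hcross') hAd
    _ ≤ 48 * (1 - x)⁻¹ * (garsiaI γ p f) ^ (1/(2*(p:ℝ))) * (b-a) ^ γ := by
      nlinarith [mul_nonneg hI'0 hℓγ, hS1, hS0]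

lemma garsia_chain {γ : ℝ} {p : ℕ} {f : ℝ → ℝ} (hγ0 : 0 < γ) (hp : 1 ≤ p)
    (hf : ContinuousOn f (Icc 0 1))
    (hInt : IntegrableOn (garsiaF γ p f) garsiaRegion) :
    ∀ n : ℕ, ∀ s t : ℝ, 0 < s → s < t → t ≤ 1 → t ≤ 2 ^ (n+1) * s →
    |f t - f s| ≤ 48 * (1 - (2:ℝ)⁻¹ ^ γ)⁻¹ * (garsiaI γ p f) ^ (1/(2*(p:ℝ))) * t ^ γ *
      ∑ k ∈ Finset.range (n+1), ((2:ℝ)⁻¹ ^ γ) ^ k := by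
  set x := (2:ℝ)⁻¹ ^ γ with hxdef
  have hx0 : 0 ≤ x := Real.rpow_nonneg (by norm_num) _
  have hx1 : x < 1 := Real.rpow_lt_one (by norm_num) (by norm_num) hγ0
  have hS0 : 0 < (1 - x)⁻¹ := inv_pos.2 (by linarith)
  have hI'0 : 0 ≤ (garsiaI γ p f) ^ (1/(2*(p:ℝ))) := Real.rpow_nonneg (garsiaI_nonneg γ p f) _
  have hC0 : 0 ≤ 48 * (1 - x)⁻¹ * (garsiaI γ p f) ^ (1/(2*(p:ℝ))) := by positivity
  intro n
  induction n with
  | zero =>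
    intro s t hs hst ht1 hle
    have h2 : t ≤ 2 * s := by norm_num at hle; linarith
    have hm := garsia_master hγ0 hp hf hInt hs.le hst ht1 (by linarith)
    have htγ : (t - s) ^ γ ≤ t ^ γ := Real.rpow_le_rpow (by linarith) (by linarith) hγ0.le
    have hone : ∑ k ∈ Finset.range (0+1), ((2:ℝ)⁻¹ ^ γ) ^ k = 1 := by simp
    rw [hone, mul_one]
    exact hm.trans (mul_le_mul_of_nonneg_left htγ hC0)
  | succ n ih =>
    intro s t hs hst ht1 hle
    have hsum1 : (1:ℝ) ≤ ∑ k ∈ Finset.range (n+2), x ^ k := by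
      have := Finset.single_le_sum (f := fun k => x ^ k)
        (fun k _ => pow_nonneg hx0 k) (Finset.mem_range.2 (by omega : 0 < n+2))
      simpa using this
    have hsumnn : (0:ℝ) ≤ ∑ k ∈ Finset.range (n+1), x ^ k :=
      Finset.sum_nonneg fun k _ => pow_nonneg hx0 k
    by_cases h2 : t ≤ 2 * s
    · have hm := garsia_master hγ0 hp hf hInt hs.le hst ht1 (by linarith)
      have htγ : (t - s) ^ γ ≤ t ^ γ := Real.rpow_le_rpow (by linarith) (by linarith) hγ0.le
      have htγ0 : 0 ≤ t ^ γ := Real.rpow_nonneg (by linarith) _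
      calc |f t - f s| ≤ 48 * (1 - x)⁻¹ * (garsiaI γ p f) ^ (1/(2*(p:ℝ))) * (t - s) ^ γ := hm
        _ ≤ 48 * (1 - x)⁻¹ * (garsiaI γ p f) ^ (1/(2*(p:ℝ))) * t ^ γ :=
          mul_le_mul_of_nonneg_left htγ hC0
        _ ≤ 48 * (1 - x)⁻¹ * (garsiaI γ p f) ^ (1/(2*(p:ℝ))) * t ^ γ *
            ∑ k ∈ Finset.range (n+2), x ^ k := by
          nlinarith [mul_nonneg hC0 htγ0]
    · push_neg at h2
      have ht0 : 0 < t := lt_trans (by linarith) h2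
      have hmt : t/2 < t := by linarith
      have hsm : s < t/2 := by linarith
      have hm2 := garsia_master hγ0 hp hf hInt (by linarith : (0:ℝ) ≤ t/2) hmt ht1
        (by linarith)
      have hih := ih s (t/2) hs hsm (by linarith)
        (by rw [pow_succ] at hle; linarith)
      have hhalf : (t - t/2) ^ γ = t ^ γ * x := by
        rw [show t - t/2 = t * 2⁻¹ by ring, Real.mul_rpow ht0.le (by norm_num), hxdef]
      have hhalf2 : (t/2) ^ γ = t ^ γ * x := by
        rw [show t/2 = t * 2⁻¹ by ring, Real.mul_rpow ht0.le (by norm_num), hxdef]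
      have htγ0 : 0 ≤ t ^ γ := Real.rpow_nonneg ht0.le _
      have hgeom : x * (1 + ∑ k ∈ Finset.range (n+1), x ^ k) ≤
          ∑ k ∈ Finset.range (n+2), x ^ k := by
        have h1 : ∑ k ∈ Finset.range (n+2), x ^ k =
            x * ∑ k ∈ Finset.range (n+1), x ^ k + 1 := geom_sum_succ
        rw [h1]
        nlinarith [hsumnn, hx1]
      calc |f t - f s| ≤ |f t - f (t/2)| + |f (t/2) - f s| := abs_sub_le _ _ _
        _ ≤ 48 * (1 - x)⁻¹ * (garsiaI γ p f) ^ (1/(2*(p:ℝ))) * (t - t/2) ^ γ +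
            48 * (1 - x)⁻¹ * (garsiaI γ p f) ^ (1/(2*(p:ℝ))) * (t/2) ^ γ *
              ∑ k ∈ Finset.range (n+1), x ^ k := add_le_add hm2 hih
        _ = 48 * (1 - x)⁻¹ * (garsiaI γ p f) ^ (1/(2*(p:ℝ))) * t ^ γ *
            (x * (1 + ∑ k ∈ Finset.range (n+1), x ^ k)) := by
          rw [hhalf, hhalf2]; ring
        _ ≤ 48 * (1 - x)⁻¹ * (garsiaI γ p f) ^ (1/(2*(p:ℝ))) * t ^ γ *
            ∑ k ∈ Finset.range (n+2), x ^ k :=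
          mul_le_mul_of_nonneg_left hgeom (by positivity)

lemma garsia_final_pos {γ : ℝ} {p : ℕ} {f : ℝ → ℝ} (hγ0 : 0 < γ) (hγ1 : γ < 1) (hp : 1 ≤ p)
    (hf : ContinuousOn f (Icc 0 1))
    (hInt : IntegrableOn (garsiaF γ p f) garsiaRegion)
    {s t : ℝ} (hs : 0 < s) (hst : s < t) (ht1 : t ≤ 1) :
    |f t - f s| ≤ 96 * ((1 - (2:ℝ)⁻¹ ^ γ)⁻¹) ^ 2 *
      (garsiaI γ p f) ^ (1/(2*(p:ℝ))) * (t - s) ^ γ := by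
  set x := (2:ℝ)⁻¹ ^ γ with hxdef
  have hx0 : 0 ≤ x := Real.rpow_nonneg (by norm_num) _
  have hx1 : x < 1 := Real.rpow_lt_one (by norm_num) (by norm_num) hγ0
  have h1x : 0 < 1 - x := by linarith
  have hS0 : 0 < (1 - x)⁻¹ := inv_pos.2 h1x
  have hS1 : 1 ≤ (1 - x)⁻¹ := by nlinarith [mul_inv_cancel₀ h1x.ne', hS0]
  have hI'0 : 0 ≤ (garsiaI γ p f) ^ (1/(2*(p:ℝ))) := Real.rpow_nonneg (garsiaI_nonneg γ p f) _
  have htsγ : 0 ≤ (t - s) ^ γ := Real.rpow_nonneg (by linarith) _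
  by_cases h2 : t ≤ 2 * s
  · have hm := garsia_master hγ0 hp hf hInt hs.le hst ht1 (by linarith)
    calc |f t - f s| ≤ 48 * (1 - x)⁻¹ * (garsiaI γ p f) ^ (1/(2*(p:ℝ))) * (t - s) ^ γ := hm
      _ ≤ 48 * (1 - x)⁻¹ * (garsiaI γ p f) ^ (1/(2*(p:ℝ))) * (t - s) ^ γ * (2 * (1 - x)⁻¹) :=
        le_mul_of_one_le_right (by positivity) (by linarith)
      _ = 96 * ((1 - x)⁻¹) ^ 2 * (garsiaI γ p f) ^ (1/(2*(p:ℝ))) * (t - s) ^ γ := by ring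
  · push_neg at h2
    obtain ⟨n, hn⟩ : ∃ n : ℕ, 1/s < 2^n := pow_unbounded_of_one_lt (1/s) one_lt_two
    have hpow : (1:ℝ) < 2^n * s := by
      rw [div_lt_iff₀ hs] at hn; linarith
    have h2n : (2:ℝ)^n * s ≤ 2^(n+1) * s := by
      have : (0:ℝ) < 2^n * s := by positivity
      rw [pow_succ]
      nlinarith
    have hchain := garsia_chain hγ0 hp hf hInt n s t hs hst ht1 (by linarith)
    have hgeo := garsia_geom_le hx0 hx1 (n+1)
    have htγ0 : 0 ≤ t ^ γ := Real.rpow_nonneg (by linarith) _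
    have hC0 : 0 ≤ 48 * (1 - x)⁻¹ * (garsiaI γ p f) ^ (1/(2*(p:ℝ))) * t ^ γ := by positivity
    have h3 : |f t - f s| ≤ 48 * (1 - x)⁻¹ * (garsiaI γ p f) ^ (1/(2*(p:ℝ))) * t ^ γ *
        (1 - x)⁻¹ :=
      hchain.trans (mul_le_mul_of_nonneg_left hgeo hC0)
    have ht2 : t ^ γ ≤ 2 * (t - s) ^ γ := by
      calc t ^ γ ≤ (2 * (t - s)) ^ γ :=
          Real.rpow_le_rpow (by linarith) (by linarith) hγ0.le
        _ = (2:ℝ) ^ γ * (t - s) ^ γ := Real.mul_rpow (by norm_num) (by linarith)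
        _ ≤ 2 * (t - s) ^ γ := by
          have h2γ : (2:ℝ) ^ γ ≤ 2 := by
            calc (2:ℝ) ^ γ ≤ (2:ℝ) ^ (1:ℝ) :=
              Real.rpow_le_rpow_of_exponent_le one_le_two hγ1.le
            _ = 2 := Real.rpow_one 2
          exact mul_le_mul_of_nonneg_right h2γ htsγ
    calc |f t - f s| ≤ 48 * (1 - x)⁻¹ * (garsiaI γ p f) ^ (1/(2*(p:ℝ))) * t ^ γ * (1 - x)⁻¹ := h3
      _ ≤ 96 * ((1 - x)⁻¹) ^ 2 * (garsiaI γ p f) ^ (1/(2*(p:ℝ))) * (t - s) ^ γ := by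
        nlinarith [mul_le_mul_of_nonneg_left ht2
          (by positivity : (0:ℝ) ≤ 48 * (1 - x)⁻¹ * (garsiaI γ p f) ^ (1/(2*(p:ℝ))) * (1 - x)⁻¹)]


/-- Modified Garsia lemma: if
`U_{γ,p}(f)^{2p} = ∫_0^1 ∫_v^{min(4v,1)} |f(u)-f(v)|^{2p}/(u-v)^{2γp+2} du dv < ∞`,
then `f` is γ-Hölder on `[0,1]` with `‖f‖_γ ≤ c U_{γ,p}(f)` for a universal `c`. -/
theorem stmt13 (γ : ℝ) (hγ : γ ∈ Set.Ioo (0:ℝ) 1) (p : ℕ) (hp : 1 ≤ p) :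
    ∃ c > 0, ∀ f : ℝ → ℝ, ContinuousOn f (Icc 0 1) →
      IntegrableOn
        (fun q : ℝ × ℝ => |f q.2 - f q.1| ^ (2 * p) / (q.2 - q.1) ^ (2 * (p:ℝ) * γ + 2))
        garsiaRegion →
      ∀ s t : ℝ, 0 ≤ s → s < t → t ≤ 1 →
        |f t - f s| ≤
          c * (∫ q in garsiaRegion,
                |f q.2 - f q.1| ^ (2 * p) / (q.2 - q.1) ^ (2 * (p:ℝ) * γ + 2))
              ^ (1 / (2 * (p:ℝ))) * (t - s) ^ γ := by
  obtain ⟨hγ0, hγ1⟩ := hγ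
  have hx0 : 0 ≤ (2:ℝ)⁻¹ ^ γ := Real.rpow_nonneg (by norm_num) _
  have hx1 : (2:ℝ)⁻¹ ^ γ < 1 := Real.rpow_lt_one (by norm_num) (by norm_num) hγ0
  have h1x : (0:ℝ) < 1 - (2:ℝ)⁻¹ ^ γ := by linarith
  refine ⟨96 * ((1 - (2:ℝ)⁻¹ ^ γ)⁻¹) ^ 2, by positivity, fun f hf hInt s t hs0 hst ht1 => ?_⟩
  have hInt' : IntegrableOn (garsiaF γ p f) garsiaRegion := hInt
  show |f t - f s| ≤ 96 * ((1 - (2:ℝ)⁻¹ ^ γ)⁻¹) ^ 2 *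
    (garsiaI γ p f) ^ (1/(2*(p:ℝ))) * (t - s) ^ γ
  rcases eq_or_lt_of_le hs0 with heq | hs
  · subst heq
    have ht0 : 0 < t := hst
    set u : ℕ → ℝ := fun n => t * (2:ℝ)⁻¹ ^ (n+1) with hudef
    have hu_pos : ∀ n, 0 < u n := fun n => by simp only [hudef]; positivity
    have hu_lt : ∀ n, u n < t := fun n => by
      have h1 : (2:ℝ)⁻¹ ^ (n+1) < 1 :=
        pow_lt_one₀ (by norm_num) (by norm_num) (by omega)
      simp only [hudef]
      nlinarith
    have hu_mem : ∀ n, u n ∈ Icc (0:ℝ) 1 :=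
      fun n => ⟨(hu_pos n).le, (hu_lt n).le.trans ht1⟩
    have hu0 : Filter.Tendsto u Filter.atTop (nhds 0) := by
      have h1 : Filter.Tendsto (fun n : ℕ => (2:ℝ)⁻¹ ^ n) Filter.atTop (nhds 0) :=
        tendsto_pow_atTop_nhds_zero_of_lt_one (by norm_num) (by norm_num)
      have h2 := (h1.comp (Filter.tendsto_add_atTop_nat 1)).const_mul t
      simpa [hudef, Function.comp] using h2
    have hfu : Filter.Tendsto (fun n => f (u n)) Filter.atTop (nhds (f 0)) := by
      have hc : ContinuousWithinAt f (Icc 0 1) 0 := hf 0 ⟨le_rfl, zero_le_one⟩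
      exact hc.tendsto.comp (tendsto_nhdsWithin_iff.2
        ⟨hu0, Filter.Eventually.of_forall hu_mem⟩)
    have hL : Filter.Tendsto (fun n => |f t - f (u n)|) Filter.atTop (nhds (|f t - f 0|)) :=
      (tendsto_const_nhds.sub hfu).abs
    have hR : Filter.Tendsto
        (fun n => 96 * ((1 - (2:ℝ)⁻¹ ^ γ)⁻¹) ^ 2 *
          (garsiaI γ p f) ^ (1/(2*(p:ℝ))) * (t - u n) ^ γ) Filter.atTop
        (nhds (96 * ((1 - (2:ℝ)⁻¹ ^ γ)⁻¹) ^ 2 *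
          (garsiaI γ p f) ^ (1/(2*(p:ℝ))) * (t - 0) ^ γ)) := by
      have hbase : Filter.Tendsto (fun n => t - u n) Filter.atTop (nhds (t - 0)) :=
        tendsto_const_nhds.sub hu0
      have hrpow : Filter.Tendsto (fun n => (t - u n) ^ γ) Filter.atTop (nhds ((t - 0) ^ γ)) := by
        have hcont := Real.continuousAt_rpow_const (t - 0) γ (Or.inl (by simpa using ht0.ne'))
        exact (hcont.tendsto.comp hbase)
      exact hrpow.const_mul _
    refine le_of_tendsto_of_tendsto' hL hR fun n => ?_
    exact garsia_final_pos hγ0 hγ1 hp hf hInt' (hu_pos n) (hu_lt n) ht1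
  · exact garsia_final_pos hγ0 hγ1 hp hf hInt' hs hst ht1
end
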